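/- arXiv:2501.10590 — 5 statements merged into one kernel-verified Lean document; each statement's English description precedes it below -/
import Mathlib

section
/- Let c ∈ C²([0,∞)) be positive with c(x) = c0 for all x ≥ 1, for some constant c0 > 0, and let u ∈ C²(ℝ×[0,∞)) satisfy ∂²_t u(t,x) = c(x)² ∂²_x u(t,x) for all (t,x) ∈ ℝ×(0,∞). If u(t,0) = 0 and ∂_x u(t,0) = 0 for all t ∈ ℝ, then u(t,x) = 0 for all (t,x) ∈ ℝ×[0,∞). -/
open Set

namespace St3

noncomputable def p (u : ℝ → ℝ → ℝ) (q : ℝ × ℝ) : ℝ × ℝ →L[ℝ] ℝ :=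
  fderivWithin ℝ (Function.uncurry u) ((univ : Set ℝ) ×ˢ Ici 0) q

noncomputable def ut (u : ℝ → ℝ → ℝ) (q : ℝ × ℝ) : ℝ := p u q (1,0)
noncomputable def ux (u : ℝ → ℝ → ℝ) (q : ℝ × ℝ) : ℝ := p u q (0,1)

noncomputable def B (u : ℝ → ℝ → ℝ) (q : ℝ × ℝ) : ℝ × ℝ →L[ℝ] ℝ × ℝ →L[ℝ] ℝ :=
  fderiv ℝ (fderiv ℝ (Function.uncurry u)) q

lemma hSU : UniqueDiffOn ℝ ((univ : Set ℝ) ×ˢ Ici (0:ℝ)) :=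
  uniqueDiffOn_univ.prod (uniqueDiffOn_Ici 0)

lemma hO_nhds {q : ℝ × ℝ} (hq : 0 < q.2) : (univ : Set ℝ) ×ˢ Ioi (0:ℝ) ∈ nhds q :=
  (isOpen_univ.prod isOpen_Ioi).mem_nhds ⟨mem_univ _, hq⟩

lemma hS_nhds {q : ℝ × ℝ} (hq : 0 < q.2) :
    ((univ : Set ℝ) ×ˢ Ici (0:ℝ)) ∈ nhds q :=
  Filter.mem_of_superset (hO_nhds hq) (prod_mono le_rfl Ioi_subset_Ici_self)

variable {u : ℝ → ℝ → ℝ}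
  (hu : ContDiffOn ℝ 2 (Function.uncurry u) ((univ : Set ℝ) ×ˢ Ici 0))

lemma p_eq {q : ℝ × ℝ} (hq : 0 < q.2) : p u q = fderiv ℝ (Function.uncurry u) q :=
  fderivWithin_of_mem_nhds (hS_nhds hq)

include hu

lemma p_cont : ContinuousOn (p u) ((univ : Set ℝ) ×ˢ Ici 0) :=
  hu.continuousOn_fderivWithin hSU (by norm_num)

lemma ut_cont : ContinuousOn (ut u) ((univ : Set ℝ) ×ˢ Ici 0) :=
  (ContinuousLinearMap.apply ℝ ℝ ((1:ℝ),(0:ℝ))).continuous.comp_continuousOn (p_cont hu)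

lemma ux_cont : ContinuousOn (ux u) ((univ : Set ℝ) ×ˢ Ici 0) :=
  (ContinuousLinearMap.apply ℝ ℝ ((0:ℝ),(1:ℝ))).continuous.comp_continuousOn (p_cont hu)

lemma slice_x (t y : ℝ) (hy : 0 ≤ y) :
    HasDerivWithinAt (fun z => u t z) (ux u (t,y)) (Ici 0) y := by
  have hq : ((t,y) : ℝ × ℝ) ∈ (univ : Set ℝ) ×ˢ Ici (0:ℝ) := ⟨mem_univ _, hy⟩
  have hF : HasFDerivWithinAt (Function.uncurry u) (p u (t,y))
      ((univ : Set ℝ) ×ˢ Ici 0) (t,y) :=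
    (hu.differentiableOn (by norm_num) (t,y) hq).hasFDerivWithinAt
  have hι : HasDerivWithinAt (fun z => ((t,z) : ℝ × ℝ)) ((0:ℝ),(1:ℝ)) (Ici 0) y := by
    have := ((hasDerivAt_const y t).prodMk (hasDerivAt_id y)).hasDerivWithinAt (s := Ici 0)
    simpa using this
  have hmaps : MapsTo (fun z => ((t,z) : ℝ × ℝ)) (Ici 0) ((univ : Set ℝ) ×ˢ Ici 0) :=
    fun z hz => ⟨mem_univ _, hz⟩
  simpa [ux, Function.comp_def] using hF.comp_hasDerivWithinAt y hι hmaps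

lemma slice_t (t y : ℝ) (hy : 0 ≤ y) :
    HasDerivAt (fun s => u s y) (ut u (t,y)) t := by
  have hq : ((t,y) : ℝ × ℝ) ∈ (univ : Set ℝ) ×ˢ Ici (0:ℝ) := ⟨mem_univ _, hy⟩
  have hF : HasFDerivWithinAt (Function.uncurry u) (p u (t,y))
      ((univ : Set ℝ) ×ˢ Ici 0) (t,y) :=
    (hu.differentiableOn (by norm_num) (t,y) hq).hasFDerivWithinAt
  have hι : HasDerivWithinAt (fun s => ((s,y) : ℝ × ℝ)) ((1:ℝ),(0:ℝ)) (univ : Set ℝ) t := by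
    have := ((hasDerivAt_id t).prodMk (hasDerivAt_const t y)).hasDerivWithinAt (s := univ)
    simpa using this
  have hmaps : MapsTo (fun s => ((s,y) : ℝ × ℝ)) (univ : Set ℝ) ((univ : Set ℝ) ×ˢ Ici 0) :=
    fun z _ => ⟨mem_univ _, hy⟩
  have := hF.comp_hasDerivWithinAt t hι hmaps
  rw [hasDerivWithinAt_univ] at this
  simpa [ut, Function.comp_def] using this

lemma hU2 {q : ℝ × ℝ} (hq : 0 < q.2) : ContDiffAt ℝ 2 (Function.uncurry u) q :=
  hu.contDiffAt (hS_nhds hq)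

lemma hBq {q : ℝ × ℝ} (hq : 0 < q.2) :
    HasFDerivAt (fderiv ℝ (Function.uncurry u)) (B u q) q := by
  have h1 : ContDiffAt ℝ 1 (fderiv ℝ (Function.uncurry u)) q :=
    (hU2 hu hq).fderiv_right (le_refl 2)
  exact (h1.differentiableAt one_ne_zero).hasFDerivAt

lemma symm2 {q : ℝ × ℝ} (hq : 0 < q.2) (v w : ℝ × ℝ) :
    B u q v w = B u q w v := by
  have hev : ∀ᶠ y in nhds q, HasFDerivAt (Function.uncurry u)
      (fderiv ℝ (Function.uncurry u) y) y := by
    filter_upwards [hO_nhds hq] with y hy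
    exact ((hU2 hu hy.2).differentiableAt (by norm_num)).hasFDerivAt
  exact second_derivative_symmetric_of_eventually hev (hBq hu hq) v w

lemma p_fd {q : ℝ × ℝ} (hq : 0 < q.2) (v : ℝ × ℝ) :
    HasFDerivAt (fun q' => p u q' v)
      ((ContinuousLinearMap.apply ℝ ℝ v).comp (B u q)) q := by
  have hc : HasFDerivAt (fun q' => (fderiv ℝ (Function.uncurry u) q') v)
      ((ContinuousLinearMap.apply ℝ ℝ v).comp (B u q)) q :=
    (ContinuousLinearMap.apply ℝ ℝ v).hasFDerivAt.comp q (hBq hu hq)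
  apply hc.congr_of_eventuallyEq
  filter_upwards [hO_nhds hq] with y hy
  rw [p_eq hy.2]

/-- the PDE in second-fderiv form -/
lemma pde {c : ℝ → ℝ}
    (heq : ∀ t : ℝ, ∀ x > (0:ℝ),
      deriv (fun s => deriv (fun r => u r x) s) t
        = (c x)^2 * deriv (fun y => deriv (fun z => u t z) y) x)
    {t x : ℝ} (hx : 0 < x) :
    B u (t,x) (1,0) (1,0) = (c x)^2 * B u (t,x) (0,1) (0,1) := by
  have h1 : ∀ s, deriv (fun r => u r x) s = ut u (s,x) :=
    fun s => (slice_t hu s x hx.le).deriv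
  have h2 : deriv (fun s => ut u (s,x)) t = B u (t,x) (1,0) (1,0) := by
    have hcurve : HasDerivAt (fun s => ((s,x) : ℝ × ℝ)) ((1:ℝ),(0:ℝ)) t := by
      have := (hasDerivAt_id t).prodMk (hasDerivAt_const t x)
      simpa using this
    have := (p_fd hu (q := (t,x)) hx ((1:ℝ),(0:ℝ))).comp_hasDerivAt t hcurve
    simpa [ut, Function.comp_def] using this.deriv
  have h3 : deriv (fun s => deriv (fun r => u r x) s) t = B u (t,x) (1,0) (1,0) := by
    rw [funext h1, h2]
  have h4 : (fun y => deriv (fun z => u t z) y) =ᶠ[nhds x] (fun y => ux u (t,y)) := by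
    filter_upwards [Ioi_mem_nhds hx] with y hy
    exact (((slice_x hu t y (le_of_lt hy)).hasDerivAt (Ici_mem_nhds hy))).deriv
  have h5 : deriv (fun y => ux u (t,y)) x = B u (t,x) (0,1) (0,1) := by
    have hcurve : HasDerivAt (fun y => ((t,y) : ℝ × ℝ)) ((0:ℝ),(1:ℝ)) x := by
      have := (hasDerivAt_const x t).prodMk (hasDerivAt_id x)
      simpa using this
    have := (p_fd hu (q := (t,x)) hx ((0:ℝ),(1:ℝ))).comp_hasDerivAt x hcurve
    simpa [ux, Function.comp_def] using this.deriv
  have := heq t x hx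
  rw [h3, h4.deriv_eq, h5] at this
  exact this

end St3

namespace St3

noncomputable def cd (c : ℝ → ℝ) : ℝ → ℝ := derivWithin c (Ici 0)

variable {u : ℝ → ℝ → ℝ}
  (hu : ContDiffOn ℝ 2 (Function.uncurry u) ((univ : Set ℝ) ×ˢ Ici 0))
variable {c : ℝ → ℝ} (hcC : ContDiffOn ℝ 2 c (Ici 0))

lemma B_fst (q : ℝ × ℝ) (x₁ x₂ : ℝ) (v : ℝ × ℝ) :
    B u q (x₁, x₂) v = x₁ * B u q (1,0) v + x₂ * B u q (0,1) v := by
  have h : ((x₁, x₂) : ℝ × ℝ) = x₁ • ((1:ℝ),(0:ℝ)) + x₂ • ((0:ℝ),(1:ℝ)) := by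
    simp [Prod.ext_iff]
  rw [h, map_add, map_smul, map_smul]
  simp

include hcC

lemma c_hasDeriv {x : ℝ} (hx : 0 < x) : HasDerivAt c (cd c x) x :=
  ((hcC.differentiableOn (by norm_num) x (le_of_lt hx)).hasDerivWithinAt).hasDerivAt
    (Ici_mem_nhds hx)

lemma cd_cont : ContinuousOn (cd c) (Ici 0) :=
  (hcC.derivWithin (uniqueDiffOn_Ici 0) (m := 1) (by norm_num)).continuousOn

include hu

lemma char_deriv
    (hcpos : ∀ x ∈ Ici (0:ℝ), 0 < c x)
    (heq : ∀ t : ℝ, ∀ x > (0:ℝ),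
      deriv (fun s => deriv (fun r => u r x) s) t
        = (c x)^2 * deriv (fun y => deriv (fun z => u t z) y) x)
    {γ : ℝ → ℝ} {s : ℝ} (hs : 0 < s) {ε : ℝ} (hε : ε = 1 ∨ ε = -1)
    (hγ : HasDerivAt γ (-ε * (c s)⁻¹) s) :
    HasDerivAt (fun r => ut u (γ r, r) + ε * c r * ux u (γ r, r))
      (ε * cd c s * ux u (γ s, s)) s := by
  have hcs : c s ≠ 0 := ne_of_gt (hcpos s (le_of_lt hs))
  have hcurve : HasDerivAt (fun r => ((γ r, r) : ℝ × ℝ)) ((-ε * (c s)⁻¹, 1)) s :=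
    hγ.prodMk (hasDerivAt_id s)
  have hq2 : (0:ℝ) < ((γ s, s) : ℝ × ℝ).2 := hs
  have hut : HasDerivAt (fun r => ut u (γ r, r)) (B u (γ s, s) (-ε * (c s)⁻¹, 1) (1,0)) s := by
    have h2 := HasFDerivAt.comp_hasDerivAt (f := fun r => ((γ r, r) : ℝ × ℝ))
      (l := fun q' => p u q' ((1:ℝ),(0:ℝ))) s (p_fd hu hq2 _) hcurve
    simpa [ut, Function.comp_def] using h2
  have hux : HasDerivAt (fun r => ux u (γ r, r)) (B u (γ s, s) (-ε * (c s)⁻¹, 1) (0,1)) s := by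
    have h2 := HasFDerivAt.comp_hasDerivAt (f := fun r => ((γ r, r) : ℝ × ℝ))
      (l := fun q' => p u q' ((0:ℝ),(1:ℝ))) s (p_fd hu hq2 _) hcurve
    simpa [ux, Function.comp_def] using h2
  have hc : HasDerivAt (fun r => ε * c r) (ε * cd c s) s :=
    (c_hasDeriv hcC hs).const_mul ε
  have htot : HasDerivAt (fun r => ut u (γ r, r) + ε * c r * ux u (γ r, r)) _ s :=
    hut.add (hc.mul hux)
  convert htot using 1
  have hpde : B u (γ s, s) (1,0) (1,0) = (c s)^2 * B u (γ s, s) (0,1) (0,1) :=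
    pde hu heq hs
  have hsym : B u (γ s, s) (0,1) (1,0) = B u (γ s, s) (1,0) (0,1) := symm2 hu hq2 _ _
  have hexp1 := B_fst (u := u) (γ s, s) (-ε * (c s)⁻¹) 1 ((1:ℝ),(0:ℝ))
  have hexp2 := B_fst (u := u) (γ s, s) (-ε * (c s)⁻¹) 1 ((0:ℝ),(1:ℝ))
  rw [hexp1, hexp2, hpde, hsym]
  rcases hε with rfl | rfl <;> field_simp <;> ring

end St3

namespace St3

noncomputable def phi (c : ℝ → ℝ) (x : ℝ) : ℝ := ∫ s in (0:ℝ)..x, (c s)⁻¹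

section phi
variable {c : ℝ → ℝ} (hcC : ContDiffOn ℝ 2 c (Ici 0))
  (hcpos : ∀ x ∈ Ici (0:ℝ), 0 < c x)

include hcC hcpos

lemma inv_c_contOn : ContinuousOn (fun s => (c s)⁻¹) (Ici 0) :=
  (hcC.continuousOn).inv₀ fun x hx => ne_of_gt (hcpos x hx)

lemma phi_intble {a b : ℝ} (ha : 0 ≤ a) (hb : 0 ≤ b) :
    IntervalIntegrable (fun s => (c s)⁻¹) MeasureTheory.volume a b :=
  ((inv_c_contOn hcC hcpos).mono
    (fun y hy => le_trans (le_min ha hb) hy.1)).intervalIntegrable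

lemma phi_diff {x : ℝ} (hx : 0 < x) : HasDerivAt (phi c) (c x)⁻¹ x := by
  refine intervalIntegral.integral_hasDerivAt_right
    (phi_intble hcC hcpos le_rfl hx.le) ?_ ?_
  · exact ⟨Ioi 0, Ioi_mem_nhds hx,
      (((inv_c_contOn hcC hcpos).mono Ioi_subset_Ici_self)).aestronglyMeasurable
        measurableSet_Ioi⟩
  · exact (inv_c_contOn hcC hcpos).continuousAt (Ici_mem_nhds hx)

lemma phi_mono {a b : ℝ} (ha : 0 ≤ a) (hab : a ≤ b) : phi c a ≤ phi c b := by
  have hb : 0 ≤ b := le_trans ha hab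
  have hadd := intervalIntegral.integral_add_adjacent_intervals
    (phi_intble hcC hcpos le_rfl ha) (phi_intble hcC hcpos ha hb)
  have hnn : 0 ≤ ∫ s in a..b, (c s)⁻¹ := by
    apply intervalIntegral.integral_nonneg hab
    intro y hy
    exact le_of_lt (inv_pos.mpr (hcpos y (le_trans ha hy.1)))
  have : phi c b = phi c a + ∫ s in a..b, (c s)⁻¹ := by
    rw [phi, phi, ← hadd]
  linarith

lemma phi_nonneg {x : ℝ} (hx : 0 ≤ x) : 0 ≤ phi c x := by
  have h0 : phi c 0 = 0 := intervalIntegral.integral_same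
  have := phi_mono hcC hcpos le_rfl hx
  linarith

lemma phi_contOn {X : ℝ} (hX : 0 ≤ X) : ContinuousOn (phi c) (Icc 0 X) := by
  have h : MeasureTheory.IntegrableOn (fun s => (c s)⁻¹) (uIcc 0 X) := by
    rw [uIcc_of_le hX]
    exact ((inv_c_contOn hcC hcpos).mono (fun y hy => hy.1)).integrableOn_Icc
  have := intervalIntegral.continuousOn_primitive_interval h
  rwa [uIcc_of_le hX] at this

end phi
end St3

namespace St3

variable {u : ℝ → ℝ → ℝ}
  (hu : ContDiffOn ℝ 2 (Function.uncurry u) ((univ : Set ℝ) ×ˢ Ici 0))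
variable {c : ℝ → ℝ} (hcC : ContDiffOn ℝ 2 c (Ici 0))
  (hcpos : ∀ x ∈ Ici (0:ℝ), 0 < c x)

include hu hcC hcpos

lemma step
    (heq : ∀ t : ℝ, ∀ x > (0:ℝ),
      deriv (fun s => deriv (fun r => u r x) s) t
        = (c x)^2 * deriv (fun y => deriv (fun z => u t z) y) x)
    {t0 A X K m δ xb x₁ : ℝ}
    (hm : 0 < m) (hmle : ∀ s ∈ Icc (0:ℝ) X, m ≤ c s)
    (hKnn : 0 ≤ K) (hK : ∀ s ∈ Icc (0:ℝ) X, |cd c s| ≤ K)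
    (hθ : K * δ * (1 + 1/m) ≤ 1/2)
    (hA : ∀ s ∈ Icc (0:ℝ) X, phi c s + 1 ≤ A)
    (hxb0 : 0 ≤ xb) (hx₁X : x₁ ≤ X) (hle : xb ≤ x₁) (hd : x₁ ≤ xb + δ)
    (hbase : ∀ t, |t - t0| ≤ A - phi c xb → ut u (t,xb) = 0 ∧ ux u (t,xb) = 0) :
    ∀ x ∈ Icc xb x₁, ∀ t, |t - t0| ≤ A - phi c x →
      ut u (t,x) = 0 ∧ ux u (t,x) = 0 := by
  have hX0 : 0 ≤ X := le_trans (le_trans hxb0 hle) hx₁X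
  have hsubX : Icc xb x₁ ⊆ Icc 0 X := Icc_subset_Icc hxb0 hx₁X
  set g : ℝ × ℝ → ℝ := fun q => |ut u q| + |ux u q| with hg
  set R : Set (ℝ × ℝ) :=
    (Icc (t0-A) (t0+A) ×ˢ Icc xb x₁) ∩ {q | |q.1 - t0| + phi c q.2 ≤ A} with hR
  have hRmem : ∀ q : ℝ × ℝ,
      q ∈ R ↔ (q.2 ∈ Icc xb x₁ ∧ |q.1 - t0| ≤ A - phi c q.2) := by
    intro q
    constructor
    · rintro ⟨⟨h1, h2⟩, h3⟩
      simp only [mem_setOf_eq] at h3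
      exact ⟨h2, by linarith⟩
    · rintro ⟨h2, h3⟩
      have hnn : 0 ≤ phi c q.2 := phi_nonneg hcC hcpos (le_trans hxb0 h2.1)
      have habs : |q.1 - t0| ≤ A := by linarith
      rcases abs_le.1 habs with ⟨hl, hr⟩
      exact ⟨⟨⟨by linarith, by linarith⟩, h2⟩, by simp only [mem_setOf_eq]; linarith⟩
  have hRS : R ⊆ (univ : Set ℝ) ×ˢ Ici 0 := by
    intro q hq
    exact ⟨mem_univ _, le_trans hxb0 (((hRmem q).1 hq).1.1)⟩
  have hRclosed : IsClosed R := by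
    apply ContinuousOn.preimage_isClosed_of_isClosed
      (f := fun q : ℝ × ℝ => |q.1 - t0| + phi c q.2) (t := Iic A)
    · apply ContinuousOn.add
      · exact ((continuous_fst.sub continuous_const).abs).continuousOn
      · exact (phi_contOn hcC hcpos hX0).comp continuous_snd.continuousOn
          (fun q hq => hsubX hq.2)
    · exact (isClosed_Icc.prod isClosed_Icc)
    · exact isClosed_Iic
  have hRcpt : IsCompact R :=
    (isCompact_Icc.prod isCompact_Icc).of_isClosed_subset hRclosed inter_subset_left
  have hR0 : (t0, xb) ∈ R := by
    rw [hRmem]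
    refine ⟨⟨le_rfl, hle⟩, ?_⟩
    have := hA xb ⟨hxb0, le_trans hle hx₁X⟩
    simp only [sub_self, abs_zero]
    linarith
  have hgcont : ContinuousOn g R :=
    (((ut_cont hu).mono hRS).abs).add (((ux_cont hu).mono hRS).abs)
  obtain ⟨qs, hqsR, hqsmax⟩ := hRcpt.exists_isMaxOn ⟨(t0, xb), hR0⟩ hgcont
  obtain ⟨ts, xs⟩ := qs
  set M := g (ts, xs) with hM
  have hMmax : ∀ q ∈ R, g q ≤ M := fun q hq => hqsmax hq
  have hM0 : 0 ≤ M := add_nonneg (abs_nonneg _) (abs_nonneg _)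
  obtain ⟨hqs2, hqscone⟩ := (hRmem (ts, xs)).1 hqsR
  -- main claim : M ≤ 0
  have hMle : M ≤ 0 := by
    rcases eq_or_lt_of_le hqs2.1 with heqx | hltx
    · -- qs is on the base line
      subst heqx
      have hb := hbase ts hqscone
      have : g (ts, xb) = 0 := by simp [hg, hb.1, hb.2]
      simp [hM, this]
    · -- characteristic estimate
      have key : ∀ ε : ℝ, ε = 1 ∨ ε = -1 →
          |ut u (ts, xs) + ε * c xs * ux u (ts, xs)| ≤ K * M * δ := by
        intro ε hε
        have hεabs : |ε| = 1 := by rcases hε with rfl | rfl <;> norm_num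
        set γ : ℝ → ℝ := fun s => ts + ε * (phi c xs - phi c s) with hγ
        set V : ℝ → ℝ := fun s => ut u (γ s, s) + ε * c s * ux u (γ s, s) with hV
        have hγqs : γ xs = ts := by simp [hγ]
        have hIccsub : Icc xb xs ⊆ Icc 0 X :=
          Icc_subset_Icc hxb0 (le_trans hqs2.2 hx₁X)
        have hγcone : ∀ s ∈ Icc xb xs, |γ s - t0| ≤ A - phi c s := by
          intro s hs
          have hmono : phi c s ≤ phi c xs := phi_mono hcC hcpos (le_trans hxb0 hs.1) hs.2
          have h1 : |γ s - t0| ≤ |ts - t0| + |ε * (phi c xs - phi c s)| := by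
            rw [hγ]; simpa [add_sub_right_comm] using abs_add_le (ts - t0) (ε * (phi c xs - phi c s))
          rw [abs_mul, hεabs, one_mul,
            abs_of_nonneg (a := phi c xs - phi c s) (by linarith)] at h1
          linarith
        have hγR : ∀ s ∈ Icc xb xs, (γ s, s) ∈ R := by
          intro s hs
          rw [hRmem]
          exact ⟨⟨hs.1, le_trans hs.2 hqs2.2⟩, hγcone s hs⟩
        have hγcont : ContinuousOn γ (Icc xb xs) := by
          apply ContinuousOn.add continuousOn_const
          exact (continuousOn_const.sub ((phi_contOn hcC hcpos hX0).mono hIccsub)).const_smul ε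
        have hcurvecont : ContinuousOn (fun s => ((γ s, s) : ℝ × ℝ)) (Icc xb xs) :=
          hγcont.prodMk continuousOn_id
        have hmapsS : MapsTo (fun s => ((γ s, s) : ℝ × ℝ)) (Icc xb xs)
            ((univ : Set ℝ) ×ˢ Ici 0) := fun s hs => ⟨mem_univ _, le_trans hxb0 hs.1⟩
        have hVcont : ContinuousOn V (Icc xb xs) := by
          apply ContinuousOn.add
          · exact (ut_cont hu).comp hcurvecont hmapsS
          · exact (continuousOn_const.mul ((hcC.continuousOn).mono
              (fun s hs => le_trans hxb0 hs.1))).mul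
              ((ux_cont hu).comp hcurvecont hmapsS)
        have hVderiv : ∀ s ∈ Ioo xb xs,
            HasDerivAt V (ε * cd c s * ux u (γ s, s)) s := by
          intro s hs
          have hs0 : 0 < s := lt_of_le_of_lt hxb0 hs.1
          have hγder : HasDerivAt γ (-ε * (c s)⁻¹) s := by
            have h1 : HasDerivAt (fun r => phi c xs - phi c r) (-(c s)⁻¹) s :=
              (phi_diff hcC hcpos hs0).const_sub (phi c xs)
            have h2 := (h1.const_mul ε).const_add ts
            simpa [hγ, mul_comm, neg_mul, mul_neg] using h2
          exact char_deriv hu hcC hcpos heq hs0 hε hγder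
        have hVbound : ∀ s ∈ Ioo xb xs,
            |ε * cd c s * ux u (γ s, s)| ≤ K * M := by
          intro s hs
          have hsmem : s ∈ Icc xb xs := ⟨hs.1.le, hs.2.le⟩
          have h1 : |cd c s| ≤ K := hK s (hIccsub hsmem)
          have h2 : |ux u (γ s, s)| ≤ M := by
            have := hMmax _ (hγR s hsmem)
            have h3 : (0:ℝ) ≤ |ut u (γ s, s)| := abs_nonneg _
            simp only [hg] at this
            linarith
          calc |ε * cd c s * ux u (γ s, s)|
              = |cd c s| * |ux u (γ s, s)| := by
                rw [abs_mul, abs_mul, hεabs, one_mul]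
            _ ≤ K * M := mul_le_mul h1 h2 (abs_nonneg _) hKnn
        have hVxb : V xb = 0 := by
          have hb := hbase (γ xb) (hγcone xb ⟨le_rfl, hqs2.1⟩)
          simp [hV, hb.1, hb.2]
        -- Gronwall-type bound on [a', xs] and limit a' → xb
        have h1 : ∀ a' ∈ Ioo xb xs, |V xs| ≤ |V a'| + K * M * (xs - a') := by
          intro a' ha'
          have hsubIcc : Icc a' xs ⊆ Icc xb xs := Icc_subset_Icc ha'.1.le le_rfl
          have := norm_le_gronwallBound_of_norm_deriv_right_le
            (f := V) (f' := fun s => ε * cd c s * ux u (γ s, s))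
            (δ := ‖V a'‖) (K := 0) (ε := K * M) (a := a') (b := xs)
            (hVcont.mono hsubIcc)
            (fun x hx => ((hVderiv x ⟨lt_of_lt_of_le ha'.1 hx.1, hx.2⟩).hasDerivWithinAt))
            le_rfl
            (fun x hx => by
              rw [zero_mul, zero_add]
              exact hVbound x ⟨lt_of_lt_of_le ha'.1 hx.1, hx.2⟩)
            xs ⟨ha'.2.le, le_rfl⟩
          rw [gronwallBound_K0] at this
          simpa [Real.norm_eq_abs] using this
        have h2 : Filter.Tendsto (fun a' => |V a'| + K * M * (xs - a'))
            (nhdsWithin xb (Ioi xb)) (nhds (K * M * (xs - xb))) := by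
          have hVt : Filter.Tendsto V (nhdsWithin xb (Ioi xb)) (nhds 0) := by
            have hcw : ContinuousWithinAt V (Icc xb xs) xb :=
              hVcont xb ⟨le_rfl, hltx.le⟩
            have hcw2 : ContinuousWithinAt V (Ioo xb xs) xb :=
              hcw.mono Ioo_subset_Icc_self
            have := hcw2.tendsto
            rw [nhdsWithin_Ioo_eq_nhdsGT hltx] at this
            rwa [hVxb] at this
          have habs : Filter.Tendsto (fun a' => |V a'|)
              (nhdsWithin xb (Ioi xb)) (nhds 0) := by
            have := (continuous_abs.tendsto (0:ℝ)).comp hVt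
            simpa [Function.comp_def] using this
          have hlin : Filter.Tendsto (fun a' => K * M * (xs - a'))
              (nhdsWithin xb (Ioi xb)) (nhds (K * M * (xs - xb))) := by
            apply Filter.Tendsto.mono_left _ nhdsWithin_le_nhds
            exact (Continuous.tendsto
              (continuous_const.mul (continuous_const.sub continuous_id)) xb)
          simpa using habs.add hlin
        have h3 : |V xs| ≤ K * M * (xs - xb) := by
          apply ge_of_tendsto h2
          filter_upwards [Ioo_mem_nhdsGT_of_mem ⟨le_rfl, hltx⟩] with a' ha'
          exact h1 a' ha'
        have h4 : K * M * (xs - xb) ≤ K * M * δ := by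
          apply mul_le_mul_of_nonneg_left _ (mul_nonneg hKnn hM0)
          linarith [hqs2.2]
        have h5 : V xs = ut u (ts, xs) + ε * c xs * ux u (ts, xs) := by
          rw [hV]
          simp only [hγqs]
        rw [h5] at h3
        linarith
      have h1 := key 1 (Or.inl rfl)
      have h2 := key (-1) (Or.inr rfl)
      rw [one_mul] at h1
      have hcqs : m ≤ c xs := hmle xs (hsubX hqs2)
      rcases abs_le.1 h1 with ⟨h1l, h1r⟩
      rcases abs_le.1 h2 with ⟨h2l, h2r⟩
      have hut : |ut u (ts, xs)| ≤ K * M * δ := by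
        rw [abs_le]; constructor <;> nlinarith
      have hcux : |c xs * ux u (ts, xs)| ≤ K * M * δ := by
        rw [abs_le]; constructor <;> nlinarith
      have hux : |ux u (ts, xs)| * m ≤ K * M * δ := by
        calc |ux u (ts, xs)| * m ≤ |ux u (ts, xs)| * c xs :=
              mul_le_mul_of_nonneg_left hcqs (abs_nonneg _)
          _ = |c xs * ux u (ts, xs)| := by
              rw [abs_mul, abs_of_pos (lt_of_lt_of_le hm hcqs), mul_comm]
          _ ≤ K * M * δ := hcux
      -- M = |ut|+|ux| ≤ KMδ (1 + 1/m) ≤ M/2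
      have hMeq : M = |ut u (ts, xs)| + |ux u (ts, xs)| := rfl
      have hfrac : |ux u (ts, xs)| ≤ K * M * δ / m := by
        rw [le_div_iff₀ hm]; exact hux
      have hMle2 : M ≤ K * δ * (1 + 1/m) * M := by
        rw [hMeq]
        have : K * δ * (1 + 1/m) * M = K * M * δ + K * M * δ / m := by
          field_simp
        rw [this]
        exact add_le_add hut hfrac
      nlinarith
  -- conclude
  intro x hx t ht
  have hq : ((t,x) : ℝ × ℝ) ∈ R := (hRmem (t,x)).2 ⟨hx, ht⟩
  have := hMmax _ hq
  have h1 : (0:ℝ) ≤ |ut u (t,x)| := abs_nonneg _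
  have h2 : (0:ℝ) ≤ |ux u (t,x)| := abs_nonneg _
  simp only [hg] at this
  constructor
  · have : |ut u (t,x)| = 0 := le_antisymm (by linarith) h1
    exact abs_eq_zero.1 this
  · have : |ux u (t,x)| = 0 := le_antisymm (by linarith) h2
    exact abs_eq_zero.1 this

end St3

namespace St3

variable {u : ℝ → ℝ → ℝ}
  (hu : ContDiffOn ℝ 2 (Function.uncurry u) ((univ : Set ℝ) ×ˢ Ici 0))
variable {c : ℝ → ℝ} (hcC : ContDiffOn ℝ 2 c (Ici 0))
  (hcpos : ∀ x ∈ Ici (0:ℝ), 0 < c x)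

include hu

lemma base0 (hdir : ∀ t : ℝ, u t 0 = 0)
    (hneu : ∀ t : ℝ, derivWithin (fun y => u t y) (Ici 0) 0 = 0) :
    ∀ t : ℝ, ut u (t,0) = 0 ∧ ux u (t,0) = 0 := by
  intro t
  constructor
  · have h := slice_t hu t 0 le_rfl
    have hconst : (fun s => u s 0) = fun _ => (0:ℝ) := funext hdir
    rw [hconst] at h
    exact (h.unique (hasDerivAt_const t 0))
  · have h := slice_x hu t 0 le_rfl
    have huniq : UniqueDiffWithinAt ℝ (Ici (0:ℝ)) 0 := uniqueDiffOn_Ici 0 0 self_mem_Ici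
    have := h.derivWithin huniq
    rw [← this, hneu t]

include hcC hcpos

lemma interior_vanish
    (heq : ∀ t : ℝ, ∀ x > (0:ℝ),
      deriv (fun s => deriv (fun r => u r x) s) t
        = (c x)^2 * deriv (fun y => deriv (fun z => u t z) y) x)
    (hdir : ∀ t : ℝ, u t 0 = 0)
    (hneu : ∀ t : ℝ, derivWithin (fun y => u t y) (Ici 0) 0 = 0)
    {t0 X : ℝ} (hX0 : 0 < X) :
    ∀ x ∈ Icc (0:ℝ) X, ut u (t0,x) = 0 ∧ ux u (t0,x) = 0 := by
  have hne : (Icc (0:ℝ) X).Nonempty := ⟨0, le_rfl, hX0.le⟩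
  have hsub : Icc (0:ℝ) X ⊆ Ici 0 := fun y hy => hy.1
  -- min of c
  obtain ⟨z, hz, hzmin⟩ := isCompact_Icc.exists_isMinOn hne
    ((hcC.continuousOn).mono hsub)
  set m := c z with hmdef
  have hm : 0 < m := hcpos z (hsub hz)
  have hmle : ∀ s ∈ Icc (0:ℝ) X, m ≤ c s := fun s hs => hzmin hs
  -- max of |cd c|
  obtain ⟨w, hw, hwmax⟩ := isCompact_Icc.exists_isMaxOn hne
    (((cd_cont hcC).mono hsub).abs)
  set K := |cd c w| with hKdef
  have hKnn : 0 ≤ K := abs_nonneg _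
  have hK : ∀ s ∈ Icc (0:ℝ) X, |cd c s| ≤ K := fun s hs => hwmax hs
  -- choice of δ
  have hmm : 0 < 1 + 1/m := by positivity
  set P : ℝ := 2 * (K+1) * (1 + 1/m) with hPdef
  have hP : 0 < P := by positivity
  set δ : ℝ := P⁻¹ with hδdef
  have hδ : 0 < δ := by positivity
  have hθ : K * δ * (1 + 1/m) ≤ 1/2 := by
    have h1 : K * δ * (1 + 1/m) ≤ (K+1) * δ * (1 + 1/m) := by nlinarith
    have h2 : (K+1) * δ * (1 + 1/m) = 1/2 := by
      rw [hδdef, hPdef]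
      field_simp
    linarith
  -- A
  set A : ℝ := phi c X + 1 with hAdef
  have hA : ∀ s ∈ Icc (0:ℝ) X, phi c s + 1 ≤ A := by
    intro s hs
    have := phi_mono hcC hcpos hs.1 hs.2
    rw [hAdef]; linarith
  -- induction
  have main : ∀ n : ℕ, ∀ x ∈ Icc (0:ℝ) X, x ≤ n * δ →
      ∀ t, |t - t0| ≤ A - phi c x → ut u (t,x) = 0 ∧ ux u (t,x) = 0 := by
    intro n
    induction n with
    | zero =>
      intro x hx hxn t _
      have hx0 : x = 0 := le_antisymm (by simpa using hxn) hx.1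
      subst hx0
      exact base0 hu hdir hneu t
    | succ n ih =>
      intro x hx hxn t ht
      by_cases hcase : x ≤ n * δ
      · exact ih x hx hcase t ht
      · push_neg at hcase
        set xb := max (x - δ) 0 with hxbdef
        have hxb0 : 0 ≤ xb := le_max_right _ _
        have hxbx : xb ≤ x := max_le (by linarith) hx.1
        have hxbn : xb ≤ n * δ := by
          have h1 : x - δ ≤ n * δ := by
            have : (n+1 : ℝ) * δ = n * δ + δ := by ring
            have hxn' : x ≤ n * δ + δ := by
              rw [← this]; exact_mod_cast hxn
            linarith
          exact max_le h1 (by positivity)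
        have hbase := ih xb ⟨hxb0, le_trans hxbx hx.2⟩ hxbn
        have hxd : x ≤ xb + δ := by
          have : x - δ ≤ xb := le_max_left _ _
          linarith
        exact step hu hcC hcpos heq hm hmle hKnn hK hθ hA hxb0 hx.2 hxbx hxd hbase
          x ⟨hxbx, le_rfl⟩ t ht
  intro x hx
  obtain ⟨n, hn⟩ := exists_nat_ge (X / δ)
  have hXn : X ≤ n * δ := by
    rw [div_le_iff₀ hδ] at hn
    linarith
  apply main n x hx (le_trans hx.2 hXn) t0
  have := phi_mono hcC hcpos hx.1 hx.2
  rw [hAdef]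
  simp only [sub_self, abs_zero]
  linarith

lemma final
    (heq : ∀ t : ℝ, ∀ x > (0:ℝ),
      deriv (fun s => deriv (fun r => u r x) s) t
        = (c x)^2 * deriv (fun y => deriv (fun z => u t z) y) x)
    (hdir : ∀ t : ℝ, u t 0 = 0)
    (hneu : ∀ t : ℝ, derivWithin (fun y => u t y) (Ici 0) 0 = 0) :
    ∀ t : ℝ, ∀ x ∈ Ici (0:ℝ), u t x = 0 := by
  intro t x hx
  rcases eq_or_lt_of_le (show (0:ℝ) ≤ x from hx) with h0 | h0
  · rw [← h0]; exact hdir t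
  · have hux0 : ∀ y ∈ Icc (0:ℝ) x, ux u (t, y) = 0 := fun y hy =>
      (interior_vanish hu hcC hcpos heq hdir hneu h0 y hy).2
    have hder : ∀ y ∈ Icc (0:ℝ) x, HasDerivWithinAt (fun z => u t z) 0 (Icc 0 x) y := by
      intro y hy
      have h := (slice_x hu t y hy.1).mono (fun z hz => hz.1 : Icc (0:ℝ) x ⊆ Ici 0)
      rwa [hux0 y hy] at h
    have hb := Convex.norm_image_sub_le_of_norm_hasDerivWithin_le (C := 0) hder
      (fun y _ => by simp) (convex_Icc 0 x) (⟨le_rfl, h0.le⟩ : (0:ℝ) ∈ Icc (0:ℝ) x)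
      (⟨h0.le, le_rfl⟩ : x ∈ Icc (0:ℝ) x)
    rw [hdir t] at hb
    simp only [sub_zero, zero_mul] at hb
    have : ‖u t x‖ = 0 := le_antisymm (by simpa using hb) (norm_nonneg _)
    simpa using this

end St3

open St3 in
/-- lateral (sideways) uniqueness for the variable-speed 1D wave equation:
vanishing Cauchy data on the whole time-line `{x = 0}` forces the solution to vanish
identically on `ℝ × [0,∞)`. -/
theorem statement3
    (c0 : ℝ) (hc0 : 0 < c0) (c : ℝ → ℝ)
    (hcC : ContDiffOn ℝ 2 c (Ici 0))
    (hcpos : ∀ x ∈ Ici (0:ℝ), 0 < c x)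
    (hcconst : ∀ x ∈ Ici (1:ℝ), c x = c0)
    (u : ℝ → ℝ → ℝ)
    (hu : ContDiffOn ℝ 2 (Function.uncurry u) ((univ : Set ℝ) ×ˢ Ici 0))
    (heq : ∀ t : ℝ, ∀ x > (0:ℝ),
      deriv (fun s => deriv (fun r => u r x) s) t
        = (c x)^2 * deriv (fun y => deriv (fun z => u t z) y) x)
    (hdir : ∀ t : ℝ, u t 0 = 0)
    (hneu : ∀ t : ℝ, derivWithin (fun y => u t y) (Ici 0) 0 = 0) :
    ∀ t : ℝ, ∀ x ∈ Ici (0:ℝ), u t x = 0 :=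
  final hu hcC hcpos heq hdir hneu
end

section
/- Let c be a wave speed (for a constant c0 > 0). Then there exist constants C_0, C_1, λ > 0 such that for every z ∈ ℂ one has C_0 e^{−λ|z|} ≤ |v_c(z,1)| + |∂_x v_c(z,1)| ≤ C_1 e^{λ|z|}. -/
open Set

/-- `c` is a wave speed for the constant `c0 > 0`: a positive `C²` function on `[0,∞)`
equal to `c0` outside `(0,1)`. -/
def IsWaveSpeed (c0 : ℝ) (c : ℝ → ℝ) : Prop :=
  ContDiffOn ℝ 2 c (Ici 0) ∧ (∀ x ∈ Ici (0:ℝ), 0 < c x) ∧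
    ∀ x ∈ Ici (0:ℝ), x ∉ Ioo (0:ℝ) 1 → c x = c0

/-- `v = v_c` is the family of solutions of `-c(x)² ∂²ₓ v(z,x) = z² v(z,x)` with
`v(z,0) = 0`, `∂ₓ v(z,0) = 1`. -/
def IsFreqSolution (c : ℝ → ℝ) (v : ℂ → ℝ → ℂ) : Prop :=
  ∀ z : ℂ, ContDiff ℝ 2 (v z) ∧
    (∀ x ∈ Ici (0:ℝ), -(c x : ℂ)^2 * deriv (deriv (v z)) x = z^2 * v z x) ∧
    v z 0 = 0 ∧ deriv (v z) 0 = 1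

/-- two-sided exponential bounds for `|v_c(z,1)| + |∂ₓ v_c(z,1)|`. -/
theorem statement5
    (c0 : ℝ) (hc0 : 0 < c0) (c : ℝ → ℝ) (hc : IsWaveSpeed c0 c)
    (v : ℂ → ℝ → ℂ) (hv : IsFreqSolution c v) :
    ∃ C₀ > (0:ℝ), ∃ C₁ > (0:ℝ), ∃ lam > (0:ℝ), ∀ z : ℂ,
      C₀ * Real.exp (-lam * ‖z‖)
          ≤ ‖v z 1‖ + ‖deriv (v z) 1‖ ∧
      ‖v z 1‖ + ‖deriv (v z) 1‖
          ≤ C₁ * Real.exp (lam * ‖z‖) := by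
  obtain ⟨hcd, hcpos, -⟩ := hc
  -- minimum of `c` on `[0,1]`
  obtain ⟨x₀, hx₀, hmin⟩ := isCompact_Icc.exists_isMinOn (nonempty_Icc.mpr zero_le_one)
    (hcd.continuousOn.mono Icc_subset_Ici_self)
  set m : ℝ := c x₀ with hm
  have hm0 : 0 < m := hcpos x₀ hx₀.1
  set K : ℝ := max 1 (m⁻¹ * m⁻¹) with hKdef
  have hK1 : (1:ℝ) ≤ K := le_max_left _ _
  have hK0 : (0:ℝ) < K := lt_of_lt_of_le one_pos hK1
  refine ⟨1, one_pos, 2, two_pos, K + 1, by linarith, fun z => ?_⟩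
  obtain ⟨hf2, hode, hf0, hf'0⟩ := hv z
  set f : ℝ → ℂ := v z with hfdef
  have hd1 : Differentiable ℝ f := hf2.differentiable (by norm_num)
  have hd2 : Differentiable ℝ (deriv f) := by
    have := (contDiff_succ_iff_deriv (n := 1)).1 (by exact_mod_cast hf2)
    exact this.2.2.differentiable (by norm_num)
  set r : ℝ := ‖z‖ with hrdef
  have hr0 : 0 ≤ r := norm_nonneg z
  set W : ℝ → ℂ × ℂ := fun x => (z * f x, deriv f x) with hWdef
  set W' : ℝ → ℂ × ℂ := fun x => (z * deriv f x, deriv (deriv f) x) with hW'def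
  have hW : ∀ x, HasDerivAt W (W' x) x := fun x =>
    ((hd1 x).hasDerivAt.const_mul z).prodMk (hd2 x).hasDerivAt
  have hWcont : Continuous W := ((continuous_const.mul hd1.continuous).prodMk hd2.continuous)
  have hWn : ∀ x, ‖W x‖ = max (r * ‖f x‖) (‖deriv f x‖) := by
    intro x
    simp [hWdef, Prod.norm_def, norm_mul, hrdef]
  -- key differential inequality
  have hbound : ∀ x ∈ Icc (0:ℝ) 1, ‖W' x‖ ≤ (K * r) * ‖W x‖ := by
    intro x hx
    have hcx : 0 < c x := hcpos x hx.1
    have hmc : m ≤ c x := hmin hx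
    have hne : ((c x : ℂ))^2 ≠ 0 := pow_ne_zero _ (by exact_mod_cast hcx.ne')
    have hder2 : deriv (deriv f) x = -(z^2 / (c x : ℂ)^2) * f x := by
      have h := hode x hx.1
      rw [neg_mul, div_mul_eq_mul_div, ← neg_div, eq_div_iff hne]
      linear_combination -h
    have hKc : ((c x)^2)⁻¹ ≤ K := by
      have h1 : m^2 ≤ (c x)^2 := by nlinarith
      have h2 : ((c x)^2)⁻¹ ≤ (m^2)⁻¹ := by
        apply inv_anti₀ (by positivity) h1
      calc ((c x)^2)⁻¹ ≤ (m^2)⁻¹ := h2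
        _ = m⁻¹ * m⁻¹ := by rw [sq, mul_inv]
        _ ≤ K := le_max_right _ _
    have hW1le : r * ‖f x‖ ≤ ‖W x‖ := (hWn x) ▸ le_max_left _ _
    have hW2le : ‖deriv f x‖ ≤ ‖W x‖ := (hWn x) ▸ le_max_right _ _
    have hWnn : 0 ≤ ‖W x‖ := norm_nonneg _
    rw [show ‖W' x‖ = max (r * ‖deriv f x‖) (‖deriv (deriv f) x‖) by
      simp [hW'def, Prod.norm_def, norm_mul, hrdef]]
    apply max_le
    · nlinarith [mul_le_mul_of_nonneg_left hW2le hr0,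
        mul_nonneg (mul_nonneg (sub_nonneg.2 hK1) hr0) hWnn]
    · have habs : ‖deriv (deriv f) x‖ = ((c x)^2)⁻¹ * (r * (r * ‖f x‖)) := by
        rw [hder2]
        simp [norm_mul, norm_div, norm_pow, Complex.norm_real, Real.norm_eq_abs, abs_of_pos hcx, div_eq_mul_inv]
        ring
      rw [habs]
      nlinarith [mul_le_mul_of_nonneg_right hKc
        (mul_nonneg hr0 (mul_nonneg hr0 (norm_nonneg (f x)))),
        mul_le_mul_of_nonneg_left hW1le (mul_nonneg hK0.le hr0)]
  have hW0 : ‖W 0‖ = 1 := by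
    simp [hWdef, Prod.norm_def, hf0, hf'0]
  -- forward Gronwall
  have hforward : ∀ x ∈ Icc (0:ℝ) 1, ‖W x‖ ≤ Real.exp (K * r * x) := by
    intro x hx
    have h := norm_le_gronwallBound_of_norm_deriv_right_le (f := W) (f' := W')
      (δ := 1) (K := K * r) (ε := 0) (a := 0) (b := 1) hWcont.continuousOn
      (fun y _ => (hW y).hasDerivWithinAt) hW0.le
      (fun y hy => by rw [add_zero]; exact hbound y (Ico_subset_Icc_self hy)) x hx
    rwa [gronwallBound_ε0, sub_zero, one_mul] at h
  -- backward Gronwall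
  have hback : 1 ≤ ‖W 1‖ * Real.exp (K * r) := by
    have hg : ∀ x : ℝ, HasDerivAt (fun t => W (1 - t)) ((-1 : ℝ) • W' (1 - x)) x := fun x =>
      (hW (1 - x)).scomp x ((hasDerivAt_id x).const_sub 1)
    have h := norm_le_gronwallBound_of_norm_deriv_right_le (f := fun t => W (1 - t))
      (f' := fun x => (-1 : ℝ) • W' (1 - x))
      (δ := ‖W 1‖) (K := K * r) (ε := 0) (a := 0) (b := 1)
      (hWcont.comp (continuous_const.sub continuous_id)).continuousOn
      (fun y _ => (hg y).hasDerivWithinAt) (by norm_num)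
      (fun y hy => by
        rw [add_zero, norm_smul]
        simp only [norm_neg, norm_one]
        rw [one_mul]
        exact hbound (1 - y) ⟨by linarith [hy.2], by linarith [hy.1]⟩) 1 (by norm_num)
    rw [gronwallBound_ε0, sub_zero, mul_one] at h
    simpa [hW0] using h
  -- bound for |v z 1| itself
  have hv1 : ‖f 1‖ ≤ Real.exp (K * r) := by
    have h := norm_le_gronwallBound_of_norm_deriv_right_le (f := f) (f' := deriv f)
      (δ := 0) (K := 0) (ε := Real.exp (K * r)) (a := 0) (b := 1) hd1.continuous.continuousOn
      (fun y _ => (hd1 y).hasDerivAt.hasDerivWithinAt)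
      (by simp [hf0])
      (fun y hy => by
        rw [zero_mul, zero_add]
        calc ‖deriv f y‖ ≤ ‖W y‖ := (hWn y) ▸ le_max_right _ _
          _ ≤ Real.exp (K * r * y) := hforward y (Ico_subset_Icc_self hy)
          _ ≤ Real.exp (K * r) := Real.exp_le_exp.2 (by nlinarith [hy.1, hy.2, mul_nonneg hK0.le hr0])) 1 (by norm_num)
    rw [gronwallBound_K0] at h
    simpa using h
  -- put it together
  set a : ℝ := ‖v z 1‖ with hadef
  set b : ℝ := ‖deriv (v z) 1‖ with hbdef
  have ha0 : 0 ≤ a := norm_nonneg _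
  have hb0 : 0 ≤ b := norm_nonneg _
  have hW1 : ‖W 1‖ = max (r * a) b := hWn 1
  have hexp1 : (1:ℝ) ≤ Real.exp r := Real.one_le_exp hr0
  have hexpr : r ≤ Real.exp r := by linarith [Real.add_one_le_exp r]
  constructor
  · -- lower bound
    have hmax : max (r * a) b ≤ Real.exp r * (a + b) := by
      apply max_le
      · nlinarith
      · nlinarith
    have h1 : 1 ≤ Real.exp ((K + 1) * r) * (a + b) := by
      calc (1:ℝ) ≤ ‖W 1‖ * Real.exp (K * r) := hback
        _ = max (r * a) b * Real.exp (K * r) := by rw [hW1]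
        _ ≤ (Real.exp r * (a + b)) * Real.exp (K * r) :=
            mul_le_mul_of_nonneg_right hmax (Real.exp_nonneg _)
        _ = Real.exp ((K + 1) * r) * (a + b) := by
            rw [mul_right_comm, ← Real.exp_add]; ring_nf
    have h2 := mul_le_mul_of_nonneg_left h1 (Real.exp_nonneg (-((K + 1) * r)))
    rw [mul_one, ← mul_assoc, ← Real.exp_add] at h2
    simp only [neg_add_cancel, Real.exp_zero, one_mul] at h2
    calc 1 * Real.exp (-(K + 1) * r) = Real.exp (-((K + 1) * r)) := by ring_nf
      _ ≤ a + b := h2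
  · -- upper bound
    have hb1 : b ≤ Real.exp (K * r) := by
      have := hforward 1 (by norm_num)
      rw [hW1] at this
      exact le_trans (le_max_right _ _) (by simpa using this)
    have hKr : Real.exp (K * r) ≤ Real.exp ((K + 1) * r) := Real.exp_le_exp.2 (by nlinarith)
    calc a + b ≤ Real.exp (K * r) + Real.exp (K * r) := add_le_add hv1 hb1
      _ = 2 * Real.exp (K * r) := by ring
      _ ≤ 2 * Real.exp ((K + 1) * r) := by linarith
end

section
/- For j = 1,2 let c_j be a wave speed (for the same constant c0 > 0). If for every ξ > 0 one has v_{c_1}(ξ,1) = 0 if and only if v_{c_2}(ξ,1) = 0, then ∫₀¹ dx/c_1(x) = ∫₀¹ dx/c_2(x). -/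
open Set

/-- `v = v_c` is the family of real solutions of `-c(x)² ∂²ₓ v(ξ,x) = ξ² v(ξ,x)` with
`v(ξ,0) = 0`, `∂ₓ v(ξ,0) = 1`. -/
def IsRealFreqSolution (c : ℝ → ℝ) (v : ℝ → ℝ → ℝ) : Prop :=
  ∀ ξ : ℝ, ContDiff ℝ 2 (v ξ) ∧
    (∀ x ∈ Ici (0:ℝ), -(c x)^2 * deriv (deriv (v ξ)) x = ξ^2 * v ξ x) ∧
    v ξ 0 = 0 ∧ deriv (v ξ) 0 = 1

open Real

noncomputable def wsCb (c : ℝ → ℝ) : ℝ → ℝ := fun x => c (max x 0)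
noncomputable def wsD (c : ℝ → ℝ) : ℝ → ℝ := fun x => derivWithin c (Ici 0) (max x 0)

theorem wsCb_cont {c0 c} (hc : IsWaveSpeed c0 c) : Continuous (wsCb c) := by
  have h1 : Continuous (fun x : ℝ => max x 0) := continuous_id.max continuous_const
  exact (hc.1.continuousOn).comp_continuous h1 (fun x => mem_Ici.2 (le_max_right _ _))

theorem wsCb_eq {c0 c} (hc : IsWaveSpeed c0 c) {x : ℝ} (hx : 0 ≤ x) : wsCb c x = c x := by
  simp [wsCb, max_eq_left hx]

theorem wsD_cont {c0 c} (hc : IsWaveSpeed c0 c) : Continuous (wsD c) := by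
  have h1 : Continuous (fun x : ℝ => max x 0) := continuous_id.max continuous_const
  have h2 : ContinuousOn (derivWithin c (Ici 0)) (Ici 0) :=
    hc.1.continuousOn_derivWithin (uniqueDiffOn_Ici 0) (by norm_num)
  exact h2.comp_continuous h1 (fun x => mem_Ici.2 (le_max_right _ _))

theorem wsCb_bounds {c0 c} (hc0 : 0 < c0) (hc : IsWaveSpeed c0 c) :
    ∃ cL cU : ℝ, 0 < cL ∧ (∀ x, cL ≤ wsCb c x ∧ wsCb c x ≤ cU) := by
  obtain ⟨xm, hxm, hmin⟩ := isCompact_Icc.exists_isMinOn (s := Icc (0:ℝ) 1)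
    (nonempty_Icc.2 zero_le_one) ((wsCb_cont hc).continuousOn)
  obtain ⟨xM, hxM, hmax⟩ := isCompact_Icc.exists_isMaxOn (s := Icc (0:ℝ) 1)
    (nonempty_Icc.2 zero_le_one) ((wsCb_cont hc).continuousOn)
  refine ⟨min (wsCb c xm) c0, max (wsCb c xM) c0, ?_, ?_⟩
  · have := hc.2.1 (max xm 0) (mem_Ici.2 (le_max_right _ _))
    exact lt_min this hc0
  · intro x
    rcases le_or_gt x 0 with h | h
    · have : wsCb c x = c0 := by
        have h0 : max x 0 = 0 := max_eq_right h
        simp only [wsCb, h0]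
        exact hc.2.2 0 (mem_Ici.2 le_rfl) (by simp)
      rw [this]
      exact ⟨min_le_right _ _, le_max_right _ _⟩
    rcases le_or_gt x 1 with h1 | h1
    · exact ⟨le_trans (min_le_left _ _) (hmin ⟨h.le, h1⟩),
        le_trans (hmax ⟨h.le, h1⟩) (le_max_left _ _)⟩
    · have : wsCb c x = c0 := by
        rw [wsCb_eq hc (by linarith)]
        exact hc.2.2 x (mem_Ici.2 (by linarith)) (fun hmem => absurd hmem.2 (not_lt.2 h1.le))
      rw [this]
      exact ⟨min_le_right _ _, le_max_right _ _⟩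
theorem wsDeriv2 (V : ℝ → ℝ) (h : ContDiff ℝ 2 V) : ContDiff ℝ 1 (deriv V) := by
  have h' : ContDiff ℝ ((1:ℕ) + 1) V := by exact_mod_cast h
  exact (contDiff_succ_iff_deriv.mp h').2.2

theorem wsDeriv2' (V : ℝ → ℝ) (h : ContDiff ℝ 1 V) : Continuous (deriv V) := by
  have h' : ContDiff ℝ ((0:ℕ) + 1) V := by exact_mod_cast h
  exact ((contDiff_succ_iff_deriv.mp h').2.2).continuous

theorem wsNonvanish {c : ℝ → ℝ} {cL : ℝ} (hcL : 0 < cL) (hcb : ∀ x, cL ≤ wsCb c x)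
    (hceq : ∀ x : ℝ, 0 ≤ x → wsCb c x = c x)
    {V : ℝ → ℝ}
    (hV : ∀ x, HasDerivAt V (deriv V x) x)
    (hV' : ∀ x, HasDerivAt (deriv V) (deriv (deriv V) x) x)
    {ξ : ℝ} (hξ : 0 < ξ)
    (hODE : ∀ x ∈ Ici (0:ℝ), -(c x)^2 * deriv (deriv V) x = ξ^2 * V x)
    (hV'0 : deriv V 0 = 1) :
    ∀ x ∈ Icc (0:ℝ) 1, V x ≠ 0 ∨ deriv V x ≠ 0 := by
  intro x hx
  by_contra hcon
  push_neg at hcon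
  obtain ⟨h1, h2⟩ := hcon
  -- set up the ODE uniqueness argument
  set μ : ℝ → ℝ := fun t => ξ^2 / (wsCb c t)^2 with hμ
  have hμb : ∀ t, |μ t| ≤ ξ^2 / cL^2 := by
    intro t
    have h3 : cL ≤ wsCb c t := hcb t
    have h4 : 0 < wsCb c t := lt_of_lt_of_le hcL h3
    rw [hμ, abs_of_nonneg (by positivity)]
    apply div_le_div_of_nonneg_left (by positivity) (by positivity)
    nlinarith
  set M : ℝ := max 1 (ξ^2 / cL^2) with hM
  have hM0 : 0 ≤ M := le_trans zero_le_one (le_max_left _ _)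
  set K : NNReal := Real.toNNReal M with hK
  set vf : ℝ → ℝ × ℝ → ℝ × ℝ := fun t p => (p.2, -(μ t) * p.1) with hvf
  have hlip : ∀ t, LipschitzOnWith K (vf t) univ := by
    intro t
    rw [lipschitzOnWith_univ, lipschitzWith_iff_dist_le_mul]
    intro p q
    have hKM : (K : ℝ) = M := Real.coe_toNNReal _ hM0
    rw [hKM]
    rw [Prod.dist_eq, Prod.dist_eq]
    simp only [hvf, Real.dist_eq]
    have e1 : -(μ t) * p.1 - -(μ t) * q.1 = -(μ t) * (p.1 - q.1) := by ring
    rw [e1, abs_mul, abs_neg]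
    have b1 : |p.2 - q.2| ≤ M * max |p.1 - q.1| |p.2 - q.2| := by
      calc |p.2 - q.2| ≤ max |p.1 - q.1| |p.2 - q.2| := le_max_right _ _
        _ = 1 * max |p.1 - q.1| |p.2 - q.2| := by ring
        _ ≤ M * max |p.1 - q.1| |p.2 - q.2| := by
            apply mul_le_mul_of_nonneg_right (le_max_left _ _) (le_max_of_le_left (abs_nonneg _))
    have b2 : |μ t| * |p.1 - q.1| ≤ M * max |p.1 - q.1| |p.2 - q.2| := by
      apply mul_le_mul (le_trans (hμb t) (le_max_right _ _)) (le_max_left _ _)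
        (abs_nonneg _) hM0
    exact max_le b1 b2
  set f : ℝ → ℝ × ℝ := fun t => (V t, deriv V t) with hf
  have hderiv : ∀ t ∈ Ioc (0:ℝ) x, HasDerivWithinAt f (vf t (f t)) (Iic t) t := by
    intro t ht
    have hd : HasDerivAt f (deriv V t, deriv (deriv V) t) t := (hV t).prodMk (hV' t)
    have heq : vf t (f t) = (deriv V t, deriv (deriv V) t) := by
      have hct : wsCb c t = c t := hceq t ht.1.le
      have hc0 : c t ≠ 0 := by
        have := hcb t; rw [hct] at this; linarith
      have := hODE t (le_of_lt ht.1)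
      simp only [hvf, hf, hμ, hct]
      refine Prod.ext rfl ?_
      field_simp
      nlinarith [this]
    rw [heq]
    exact hd.hasDerivWithinAt
  have hzero : ∀ t ∈ Ioc (0:ℝ) x, HasDerivWithinAt (fun _ : ℝ => ((0:ℝ),(0:ℝ)))
      (vf t ((0:ℝ),(0:ℝ))) (Iic t) t := by
    intro t ht
    have : vf t ((0:ℝ),(0:ℝ)) = ((0:ℝ),(0:ℝ)) := by simp [hvf]
    rw [this]
    exact (hasDerivAt_const t _).hasDerivWithinAt
  have := ODE_solution_unique_of_mem_Icc_left (v := vf) (s := fun _ => univ) (fun t _ => hlip t)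
    (f := f) (g := fun _ => ((0:ℝ),(0:ℝ))) (a := 0) (b := x)
    (Continuous.continuousOn (by
      have hVc : Continuous V := Differentiable.continuous (fun y => (hV y).differentiableAt)
      have hV'c : Continuous (deriv V) := Differentiable.continuous (fun y => (hV' y).differentiableAt)
      exact hVc.prodMk hV'c))
    hderiv (fun _ _ => mem_univ _)
    continuousOn_const hzero (fun _ _ => mem_univ _)
    (by simp [hf, h1, h2])
  have h0 := this (left_mem_Icc.2 hx.1)
  simp only [hf, Prod.ext_iff] at h0
  rw [hV'0] at h0
  exact one_ne_zero h0.2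

theorem wsCb_hasDeriv {c0 : ℝ} {c : ℝ → ℝ} (hc : IsWaveSpeed c0 c) :
    ∀ x ∈ Ico (0:ℝ) 1, HasDerivWithinAt (wsCb c) (wsD c x) (Ici x) x := by
  intro x hx
  rcases eq_or_lt_of_le hx.1 with h0 | h0
  · -- x = 0
    subst h0
    have hdw : DifferentiableWithinAt ℝ c (Ici 0) 0 :=
      (hc.1.differentiableOn (by norm_num)) 0 (mem_Ici.2 le_rfl)
    have h1 : HasDerivWithinAt c (derivWithin c (Ici 0) 0) (Ici 0) 0 := hdw.hasDerivWithinAt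
    have h2 : wsD c 0 = derivWithin c (Ici 0) 0 := by simp [wsD]
    rw [h2]
    exact h1.congr (fun y hy => by simp [wsCb, max_eq_left (mem_Ici.1 hy)])
      (by simp [wsCb])
  · -- 0 < x
    have hnb : Ici (0:ℝ) ∈ nhds x := Ici_mem_nhds h0
    have hca : ContDiffAt ℝ 2 c x := hc.1.contDiffAt hnb
    have hda : DifferentiableAt ℝ c x := hca.differentiableAt (by norm_num)
    have h1 : HasDerivAt c (deriv c x) x := hda.hasDerivAt
    have h2 : wsD c x = deriv c x := by
      simp only [wsD, max_eq_left h0.le]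
      exact derivWithin_of_mem_nhds hnb
    rw [h2]
    have hev : wsCb c =ᶠ[nhds x] c := by
      filter_upwards [hnb] with y hy
      simp [wsCb, max_eq_left (mem_Ici.1 hy)]
    exact (HasDerivAt.congr_of_eventuallyEq h1 hev).hasDerivWithinAt

noncomputable def wsPhi (c V : ℝ → ℝ) (ξ x : ℝ) : ℝ :=
  ξ / wsCb c x - (wsD c x / wsCb c x) *
    (V x * (wsCb c x * deriv V x / ξ) / ((V x)^2 + (wsCb c x * deriv V x / ξ)^2))

noncomputable def wsTheta (c V : ℝ → ℝ) (ξ x : ℝ) : ℝ :=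
  ∫ t in (0:ℝ)..x, wsPhi c V ξ (min (max t 0) 1)

theorem wsHalf (a b : ℝ) : |a * b / (a^2 + b^2)| ≤ 1/2 := by
  rcases eq_or_ne (a^2 + b^2) 0 with h | h
  · simp [h]
  · have hpos : 0 < a^2 + b^2 := lt_of_le_of_ne (by positivity) (Ne.symm h)
    rw [abs_div, abs_of_pos hpos, div_le_iff₀ hpos]
    have := abs_mul a b
    rw [this]
    nlinarith [sq_nonneg (|a| - |b|), abs_nonneg a, abs_nonneg b, sq_abs a, sq_abs b]

theorem wsClamp {x : ℝ} (hx : x ∈ Icc (0:ℝ) 1) : min (max x 0) 1 = x := by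
  rw [max_eq_left hx.1, min_eq_left hx.2]

theorem wsCore {c0 : ℝ} {c : ℝ → ℝ} (hc : IsWaveSpeed c0 c) (hc0 : 0 < c0)
    {cL : ℝ} (hcL : 0 < cL) (hcb : ∀ x, cL ≤ wsCb c x)
    {V : ℝ → ℝ} (hV : ContDiff ℝ 2 V) {ξ : ℝ} (hξ : 0 < ξ)
    (hODE : ∀ x ∈ Ici (0:ℝ), -(c x)^2 * deriv (deriv V) x = ξ^2 * V x)
    (hV0 : V 0 = 0) (hV'0 : deriv V 0 = 1) :
    wsTheta c V ξ 0 = 0 ∧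
    (∀ x, HasDerivAt (wsTheta c V ξ) (wsPhi c V ξ (min (max x 0) 1)) x) ∧
    (∀ x ∈ Icc (0:ℝ) 1, wsPhi c V ξ x = ξ / wsCb c x -
      (wsD c x / wsCb c x) * (sin (wsTheta c V ξ x) * cos (wsTheta c V ξ x))) ∧
    ((V 1 = 0 ↔ sin (wsTheta c V ξ 1) = 0) ∧
     Continuous (fun t : ℝ => wsPhi c V ξ (min (max t 0) 1))) := by
  have hceq : ∀ x : ℝ, 0 ≤ x → wsCb c x = c x := fun x hx => by
    simp [wsCb, max_eq_left hx]
  have hcbpos : ∀ x, 0 < wsCb c x := fun x => lt_of_lt_of_le hcL (hcb x)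
  have hcbne : ∀ x, wsCb c x ≠ 0 := fun x => (hcbpos x).ne'
  have hξne : ξ ≠ 0 := hξ.ne'
  have hVd : ∀ x, HasDerivAt V (deriv V x) x := fun x =>
    ((hV.differentiable (by norm_num)) x).hasDerivAt
  have hV1 : ContDiff ℝ 1 (deriv V) := wsDeriv2 V hV
  have hV'd : ∀ x, HasDerivAt (deriv V) (deriv (deriv V) x) x := fun x =>
    ((hV1.differentiable one_ne_zero) x).hasDerivAt
  have hVc : Continuous V := hV.continuous
  have hV'c : Continuous (deriv V) := hV1.continuous
  have hcbc : Continuous (wsCb c) := wsCb_cont hc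
  have hdc : Continuous (wsD c) := wsD_cont hc
  set W : ℝ → ℝ := fun x => wsCb c x * deriv V x / ξ with hWdef
  set ρ : ℝ → ℝ := fun x => (V x)^2 + (W x)^2 with hρdef
  have hWc : Continuous W := (hcbc.mul hV'c).div_const ξ
  have hρc : Continuous ρ := (hVc.pow 2).add (hWc.pow 2)
  have hnv := wsNonvanish hcL hcb hceq hVd hV'd hξ hODE hV'0
  have hρ : ∀ x ∈ Icc (0:ℝ) 1, 0 < ρ x := by
    intro x hx
    rcases hnv x hx with h | h
    · have : 0 < (V x)^2 := by positivity
      have h2 : 0 ≤ (W x)^2 := sq_nonneg _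
      simp only [hρdef]; nlinarith
    · have hW : W x ≠ 0 := by
        simp only [hWdef]
        exact div_ne_zero (mul_ne_zero (hcbne x) h) hξne
      have : 0 < (W x)^2 := by positivity
      have h2 : 0 ≤ (V x)^2 := sq_nonneg _
      simp only [hρdef]; nlinarith
  have hρne : ∀ x ∈ Icc (0:ℝ) 1, ρ x ≠ 0 := fun x hx => (hρ x hx).ne'
  -- continuity of phi on [0,1]
  have hφeq : ∀ x, wsPhi c V ξ x = ξ / wsCb c x - (wsD c x / wsCb c x) * (V x * W x / ρ x) := by
    intro x; rfl
  have hφcont : ContinuousOn (wsPhi c V ξ) (Icc (0:ℝ) 1) := by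
    have h1 : ContinuousOn (fun x => ξ / wsCb c x) (Icc (0:ℝ) 1) :=
      continuousOn_const.div hcbc.continuousOn (fun x _ => hcbne x)
    have h2 : ContinuousOn (fun x => (wsD c x / wsCb c x) * (V x * W x / ρ x)) (Icc (0:ℝ) 1) :=
      ((hdc.continuousOn.div hcbc.continuousOn (fun x _ => hcbne x))).mul
        (((hVc.mul hWc).continuousOn).div hρc.continuousOn hρne)
    exact h1.sub h2
  have hclampc : Continuous (fun t : ℝ => min (max t 0) 1) :=
    (continuous_id.max continuous_const).min continuous_const
  have hmaps : ∀ t : ℝ, min (max t 0) 1 ∈ Icc (0:ℝ) 1 :=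
    fun t => ⟨le_min (le_max_right _ _) zero_le_one, min_le_right _ _⟩
  have hφc : Continuous (fun t : ℝ => wsPhi c V ξ (min (max t 0) 1)) :=
    hφcont.comp_continuous hclampc hmaps
  have hθd : ∀ x, HasDerivAt (wsTheta c V ξ) (wsPhi c V ξ (min (max x 0) 1)) x := by
    intro x
    exact (hφc.integral_hasStrictDerivAt 0 x).hasDerivAt
  have hθ0 : wsTheta c V ξ 0 = 0 := intervalIntegral.integral_same
  set θ : ℝ → ℝ := wsTheta c V ξ with hθdef
  have hθdx : ∀ x ∈ Icc (0:ℝ) 1, HasDerivAt θ (wsPhi c V ξ x) x := by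
    intro x hx
    have := hθd x
    rwa [wsClamp hx] at this
  have hθc : Continuous θ :=
    Differentiable.continuous (fun x => (hθd x).differentiableAt)
  -- derivative of W (one-sided)
  set W' : ℝ → ℝ := fun x => (wsD c x * deriv V x - ξ^2 * V x / wsCb c x) / ξ with hW'def
  have hW'c : Continuous W' :=
    ((hdc.mul hV'c).sub ((continuous_const.mul hVc).div hcbc (fun x => hcbne x))).div_const ξ
  have hWd : ∀ x ∈ Ico (0:ℝ) 1, HasDerivWithinAt W (W' x) (Ici x) x := by
    intro x hx
    have hcb' := wsCb_hasDeriv hc x hx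
    have h1 : HasDerivWithinAt (fun y => wsCb c y * deriv V y)
        (wsD c x * deriv V x + wsCb c x * deriv (deriv V) x) (Ici x) x :=
      hcb'.mul (hV'd x).hasDerivWithinAt
    have h2 := h1.div_const ξ
    have heq : (wsD c x * deriv V x + wsCb c x * deriv (deriv V) x) / ξ = W' x := by
      have hO := hODE x (mem_Ici.2 hx.1)
      have hcx : wsCb c x = c x := hceq x hx.1
      have hcne : c x ≠ 0 := by rw [← hcx]; exact hcbne x
      have hdd : wsCb c x * deriv (deriv V) x = -(ξ^2) * V x / wsCb c x := by
        rw [hcx]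
        field_simp
        nlinarith [hO]
      simp only [hW'def]
      rw [hdd]
      ring
    rwa [heq] at h2
  -- the function g
  set g : ℝ → ℝ := fun x => V x * cos (θ x) - W x * sin (θ x) with hgdef
  have hgc : Continuous g := (hVc.mul (Real.continuous_cos.comp hθc)).sub
    (hWc.mul (Real.continuous_sin.comp hθc))
  set ψ : ℝ → ℝ := fun x => (V x * deriv V x + W x * W' x) / ρ x with hψdef
  have hgd : ∀ x ∈ Ico (0:ℝ) 1, HasDerivWithinAt g (ψ x * g x) (Ici x) x := by
    intro x hx
    have hxI : x ∈ Icc (0:ℝ) 1 := ⟨hx.1, hx.2.le⟩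
    have hθx := hθdx x hxI
    have hcos : HasDerivAt (fun y => cos (θ y)) (-sin (θ x) * wsPhi c V ξ x) x :=
      (Real.hasDerivAt_cos (θ x)).comp x hθx
    have hsin : HasDerivAt (fun y => sin (θ y)) (cos (θ x) * wsPhi c V ξ x) x :=
      (Real.hasDerivAt_sin (θ x)).comp x hθx
    have hd : HasDerivWithinAt g
        ((deriv V x * cos (θ x) + V x * (-sin (θ x) * wsPhi c V ξ x)) -
         (W' x * sin (θ x) + W x * (cos (θ x) * wsPhi c V ξ x))) (Ici x) x :=
      (((hVd x).hasDerivWithinAt.mul hcos.hasDerivWithinAt)).sub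
        ((hWd x hx).mul hsin.hasDerivWithinAt)
    have halg : (deriv V x * cos (θ x) + V x * (-sin (θ x) * wsPhi c V ξ x)) -
         (W' x * sin (θ x) + W x * (cos (θ x) * wsPhi c V ξ x)) = ψ x * g x := by
      have hρx := hρne x hxI
      have hφρ : wsPhi c V ξ x * ρ x = deriv V x * W x - V x * W' x := by
        have e1 : wsPhi c V ξ x * ρ x
            = ξ / wsCb c x * ρ x - wsD c x / wsCb c x * (V x * W x) := by
          rw [hφeq x]
          field_simp [hξne, hcbne x, hρx]
        have e2 : deriv V x * W x - V x * W' x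
            = ξ / wsCb c x * ρ x - wsD c x / wsCb c x * (V x * W x) := by
          simp only [hρdef, hWdef, hW'def]
          field_simp [hξne, hcbne x]
          ring
        rw [e1, e2]
      have hφx : wsPhi c V ξ x = (deriv V x * W x - V x * W' x) / ρ x :=
        by rw [eq_div_iff hρx]; exact hφρ
      rw [hφx]
      simp only [hψdef, hgdef]
      field_simp
      ring
    rwa [halg] at hd
  have hψcont : ContinuousOn ψ (Icc (0:ℝ) 1) :=
    ((hVc.mul hV'c).add (hWc.mul hW'c)).continuousOn.div hρc.continuousOn hρne
  obtain ⟨Kg0, hKg0⟩ := isCompact_Icc.exists_bound_of_continuousOn hψcont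
  set Kg : ℝ := max Kg0 0 with hKgdef
  have hKgb : ∀ x ∈ Icc (0:ℝ) 1, |ψ x| ≤ Kg :=
    fun x hx => le_trans (hKg0 x hx) (le_max_left _ _)
  have hg0 : g 0 = 0 := by
    simp only [hgdef]
    rw [hθ0]
    simp [hV0]
  have hgron := norm_le_gronwallBound_of_norm_deriv_right_le (f := g)
    (f' := fun x => ψ x * g x) (δ := 0) (K := Kg) (ε := 0) (a := 0) (b := 1)
    hgc.continuousOn hgd (by simp [hg0])
    (by
      intro x hx
      have : ‖ψ x * g x‖ = |ψ x| * ‖g x‖ := by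
        simp [abs_mul]
      rw [this]
      have := hKgb x ⟨hx.1, hx.2.le⟩
      have hgn : (0:ℝ) ≤ ‖g x‖ := norm_nonneg _
      nlinarith)
  have hgzero : ∀ x ∈ Icc (0:ℝ) 1, g x = 0 := by
    intro x hx
    have := hgron x hx
    rw [gronwallBound_ε0] at this
    simp at this
    exact abs_eq_zero.1 (le_antisymm (by simpa using this) (abs_nonneg _))
  -- P3
  have P3 : ∀ x ∈ Icc (0:ℝ) 1, wsPhi c V ξ x = ξ / wsCb c x -
      (wsD c x / wsCb c x) * (sin (θ x) * cos (θ x)) := by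
    intro x hx
    have hgx : V x * cos (θ x) - W x * sin (θ x) = 0 := hgzero x hx
    have hsc : sin (θ x)^2 + cos (θ x)^2 = 1 := sin_sq_add_cos_sq (θ x)
    have key : V x * W x = ρ x * (sin (θ x) * cos (θ x)) := by
      simp only [hρdef]
      linear_combination (W x * cos (θ x) - V x * sin (θ x)) * hgx -
        V x * W x * hsc
    have hsc2 : V x * W x / ρ x = sin (θ x) * cos (θ x) := by
      rw [key]
      exact mul_div_cancel_left₀ _ (hρne x hx)
    rw [hφeq x, hsc2]
  -- P4
  have P4 : (V 1 = 0 ↔ sin (θ 1) = 0) := by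
    have h1I : (1:ℝ) ∈ Icc (0:ℝ) 1 := ⟨zero_le_one, le_rfl⟩
    have hgx : V 1 * cos (θ 1) - W 1 * sin (θ 1) = 0 := hgzero 1 h1I
    constructor
    · intro hV1
      have hW1 : W 1 ≠ 0 := by
        intro hW1
        have := hρ 1 h1I
        simp only [hρdef] at this
        rw [hV1, hW1] at this
        norm_num at this
      rw [hV1] at hgx
      simp at hgx
      rcases hgx with h | h
      · exact absurd h hW1
      · exact h
    · intro hs
      have hcos : cos (θ 1) ≠ 0 := by
        intro hcos
        have := sin_sq_add_cos_sq (θ 1)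
        rw [hs, hcos] at this
        norm_num at this
      rw [hs] at hgx
      simp at hgx
      rcases hgx with h | h
      · exact h
      · exact absurd h hcos
  exact ⟨hθ0, hθd, P3, P4, hφc⟩

theorem wsSC (a b : ℝ) : |sin a * cos a - sin b * cos b| ≤ |a - b| := by
  have h1 : sin a * cos a = sin (2*a) / 2 := by rw [sin_two_mul]; ring
  have h2 : sin b * cos b = sin (2*b) / 2 := by rw [sin_two_mul]; ring
  have h3 : |sin (2*a) - sin (2*b)| ≤ |2*a - 2*b| := by
    rw [Real.sin_sub_sin]
    have h4 : |sin ((2*a - 2*b)/2)| ≤ |(2*a - 2*b)/2| := Real.abs_sin_le_abs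
    have h5 : |cos ((2*a + 2*b)/2)| ≤ 1 := Real.abs_cos_le_one _
    rw [abs_mul, abs_mul]
    have h6 : |(2:ℝ)| = 2 := by norm_num
    rw [h6]
    have h7 : |(2*a - 2*b)/2| = |2*a - 2*b|/2 := by rw [abs_div, h6]
    rw [h7] at h4
    nlinarith [abs_nonneg (sin ((2*a - 2*b)/2)), abs_nonneg (2*a - 2*b),
      abs_nonneg (cos ((2*a + 2*b)/2))]
  rw [h1, h2]
  have h8 : sin (2*a)/2 - sin (2*b)/2 = (sin (2*a) - sin (2*b))/2 := by ring
  rw [h8, abs_div]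
  have h6 : |(2:ℝ)| = 2 := by norm_num
  rw [h6]
  have h9 : |a - b| = |2*a - 2*b|/2 := by
    rw [show (2*a - 2*b) = 2*(a-b) by ring, abs_mul, h6]
    ring
  rw [h9]
  linarith [h3]

theorem wsPosRight {u : ℝ → ℝ} {D : ℝ} (hu : HasDerivAt u D 0) (h0 : u 0 = 0) (hD : 0 < D) :
    ∀ᶠ t in nhdsWithin 0 (Ioi 0), 0 < u t := by
  have hs := hasDerivAt_iff_tendsto_slope.1 hu
  have hpos : ∀ᶠ z in nhdsWithin 0 ({0}ᶜ), 0 < slope u 0 z :=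
    hs (Ioi_mem_nhds hD)
  have hsub : nhdsWithin (0:ℝ) (Ioi 0) ≤ nhdsWithin 0 ({0}ᶜ) :=
    nhdsWithin_mono 0 (fun t ht => ne_of_gt ht)
  filter_upwards [hsub hpos, self_mem_nhdsWithin] with t ht ht'
  have htpos : (0:ℝ) < t := ht'
  have : slope u 0 t = u t / t := by
    simp [slope_def_field, h0]
  rw [this] at ht
  have := mul_pos ht htpos
  rwa [div_mul_cancel₀ _ htpos.ne'] at this

theorem wsMain {c0 : ℝ} (hc0 : 0 < c0) {c : ℝ → ℝ} (hc : IsWaveSpeed c0 c)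
    {v : ℝ → ℝ → ℝ}
    (hv : ∀ ξ : ℝ, ContDiff ℝ 2 (v ξ) ∧
      (∀ x ∈ Ici (0:ℝ), -(c x)^2 * deriv (deriv (v ξ)) x = ξ^2 * v ξ x) ∧
      v ξ 0 = 0 ∧ deriv (v ξ) 0 = 1) :
    ∃ (T K : ℝ) (F : ℝ → ℝ), T = (∫ x in (0:ℝ)..1, (c x)⁻¹) ∧ 0 < T ∧ 0 < K ∧
      (∀ ξ η, 0 < ξ → ξ < η → F ξ < F η) ∧
      (∀ ξ η, 0 < ξ → 0 < η → |F η - F ξ| ≤ K * |η - ξ|) ∧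
      (∀ ξ, 0 < ξ → |F ξ - ξ * T| ≤ K) ∧
      (∀ ξ, 0 < ξ → (v ξ 1 = 0 ↔ ∃ n : ℤ, (n:ℝ) * π = F ξ)) := by
  obtain ⟨cL, cU, hcL, hbd⟩ := wsCb_bounds hc0 hc
  have hcb : ∀ x, cL ≤ wsCb c x := fun x => (hbd x).1
  have hcbU : ∀ x, wsCb c x ≤ cU := fun x => (hbd x).2
  have hcU : 0 < cU := lt_of_lt_of_le hcL (le_trans (hcb 0) (hcbU 0))
  have hcbpos : ∀ x, 0 < wsCb c x := fun x => lt_of_lt_of_le hcL (hcb x)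
  have hcbne : ∀ x, wsCb c x ≠ 0 := fun x => (hcbpos x).ne'
  have hceq : ∀ x : ℝ, 0 ≤ x → wsCb c x = c x := fun x hx => by
    simp [wsCb, max_eq_left hx]
  have hdc : Continuous (wsD c) := wsD_cont hc
  have hcbc : Continuous (wsCb c) := wsCb_cont hc
  obtain ⟨B0, hB0⟩ := isCompact_Icc.exists_bound_of_continuousOn
    (s := Icc (0:ℝ) 1) hdc.continuousOn
  set B : ℝ := max B0 0 with hBdef
  have hB : ∀ x ∈ Icc (0:ℝ) 1, |wsD c x| ≤ B := fun x hx =>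
    le_trans (hB0 x hx) (le_max_left _ _)
  have hBpos : 0 ≤ B := le_max_right _ _
  set L : ℝ := B / cL + 1 with hLdef
  have hL : 0 < L := by positivity
  set F : ℝ → ℝ := fun ξ => wsTheta c (v ξ) ξ 1 with hFdef
  set T : ℝ := ∫ x in (0:ℝ)..1, (wsCb c x)⁻¹ with hTdef
  have core := fun (ξ : ℝ) (hξ : 0 < ξ) =>
    wsCore hc hc0 hcL hcb (hv ξ).1 hξ (hv ξ).2.1 (hv ξ).2.2.1 (hv ξ).2.2.2
  have hTeq : T = ∫ x in (0:ℝ)..1, (c x)⁻¹ := by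
    apply intervalIntegral.integral_congr
    intro x hx
    rw [uIcc_of_le zero_le_one] at hx
    show (wsCb c x)⁻¹ = (c x)⁻¹
    rw [hceq x hx.1]
  have hcbinv : Continuous (fun x => (wsCb c x)⁻¹) := hcbc.inv₀ hcbne
  have hTlow : cU⁻¹ ≤ T := by
    have h1 : ∀ x ∈ Icc (0:ℝ) 1, cU⁻¹ ≤ (wsCb c x)⁻¹ := fun x hx =>
      inv_anti₀ (hcbpos x) (hcbU x)
    calc cU⁻¹ = ∫ _x in (0:ℝ)..1, cU⁻¹ := by simp
      _ ≤ T := intervalIntegral.integral_mono_on zero_le_one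
          intervalIntegrable_const (hcbinv.intervalIntegrable 0 1) h1
  have hT : 0 < T := lt_of_lt_of_le (by positivity) hTlow
  -- pointwise bound for phi
  have hphib : ∀ ξ : ℝ, 0 < ξ → ∀ t ∈ Icc (0:ℝ) 1,
      |wsPhi c (v ξ) ξ t - ξ * (wsCb c t)⁻¹| ≤ B / (2 * cL) := by
    intro ξ hξ t ht
    have e1 : wsPhi c (v ξ) ξ t - ξ * (wsCb c t)⁻¹ =
        -((wsD c t / wsCb c t) *
          (v ξ t * (wsCb c t * deriv (v ξ) t / ξ) /
            ((v ξ t)^2 + (wsCb c t * deriv (v ξ) t / ξ)^2))) := by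
      simp only [wsPhi]
      rw [div_eq_mul_inv]
      ring
    rw [e1, abs_neg, abs_mul]
    have h2 : |wsD c t / wsCb c t| ≤ B / cL := by
      rw [abs_div, abs_of_pos (hcbpos t)]
      exact div_le_div₀ (by positivity) (hB t ht) hcL (hcb t)
    have h3 := wsHalf (v ξ t) (wsCb c t * deriv (v ξ) t / ξ)
    calc |wsD c t / wsCb c t| * |v ξ t * (wsCb c t * deriv (v ξ) t / ξ) /
            ((v ξ t)^2 + (wsCb c t * deriv (v ξ) t / ξ)^2)|
        ≤ (B / cL) * (1/2) := mul_le_mul h2 h3 (abs_nonneg _) (by positivity)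
      _ = B / (2 * cL) := by ring
  -- asymptotic bound
  have hFbound : ∀ ξ : ℝ, 0 < ξ → |F ξ - ξ * T| ≤ B / (2 * cL) := by
    intro ξ hξ
    obtain ⟨hθ0, hθd, hP3, hP4, hφc⟩ := core ξ hξ
    have hFval : F ξ = ∫ t in (0:ℝ)..1, wsPhi c (v ξ) ξ (min (max t 0) 1) := rfl
    have hξT : ξ * T = ∫ t in (0:ℝ)..1, ξ * (wsCb c t)⁻¹ := by
      rw [hTdef, ← intervalIntegral.integral_const_mul]
    have hsub : F ξ - ξ * T = ∫ t in (0:ℝ)..1,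
        (wsPhi c (v ξ) ξ (min (max t 0) 1) - ξ * (wsCb c t)⁻¹) := by
      rw [hFval, hξT, ← intervalIntegral.integral_sub
        (hφc.intervalIntegrable 0 1)
        (Continuous.intervalIntegrable (u := fun t => ξ * (wsCb c t)⁻¹) (continuous_const.mul hcbinv) 0 1)]
    rw [hsub]
    have hb : ∀ t ∈ Set.uIoc (0:ℝ) 1,
        ‖wsPhi c (v ξ) ξ (min (max t 0) 1) - ξ * (wsCb c t)⁻¹‖ ≤ B / (2*cL) := by
      intro t ht
      rw [Set.uIoc_of_le zero_le_one] at ht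
      have htI : t ∈ Icc (0:ℝ) 1 := ⟨ht.1.le, ht.2⟩
      rw [wsClamp htI]
      exact hphib ξ hξ t htI
    have := intervalIntegral.norm_integral_le_of_norm_le_const hb
    simpa using this
  -- the derivative difference facts, shared by mono and lipschitz
  have hdiff : ∀ ξ η : ℝ, 0 < ξ → 0 < η →
      ∀ t ∈ Icc (0:ℝ) 1,
      wsPhi c (v η) η t - wsPhi c (v ξ) ξ t =
        (η - ξ) / wsCb c t - (wsD c t / wsCb c t) *
          (sin (wsTheta c (v η) η t) * cos (wsTheta c (v η) η t) -
           sin (wsTheta c (v ξ) ξ t) * cos (wsTheta c (v ξ) ξ t)) := by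
    intro ξ η hξ hη t ht
    obtain ⟨_, _, hP3a, _, _⟩ := core ξ hξ
    obtain ⟨_, _, hP3b, _, _⟩ := core η hη
    rw [hP3a t ht, hP3b t ht]
    field_simp
    ring
  -- monotonicity
  have hMono : ∀ ξ η : ℝ, 0 < ξ → ξ < η → F ξ < F η := by
    intro ξ η hξ hξη
    have hη : 0 < η := hξ.trans hξη
    obtain ⟨hθ0a, hθda, hP3a, _, _⟩ := core ξ hξ
    obtain ⟨hθ0b, hθdb, hP3b, _, _⟩ := core η hη
    set u : ℝ → ℝ := fun t => wsTheta c (v η) η t - wsTheta c (v ξ) ξ t with hudef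
    have hu0 : u 0 = 0 := by simp [hudef, hθ0a, hθ0b]
    set U' : ℝ → ℝ := fun t =>
      wsPhi c (v η) η (min (max t 0) 1) - wsPhi c (v ξ) ξ (min (max t 0) 1) with hU'def
    have huD : ∀ t, HasDerivAt u (U' t) t := fun t => (hθdb t).sub (hθda t)
    have huc : Continuous u :=
      Differentiable.continuous (fun t => (huD t).differentiableAt)
    set δ : ℝ := (η - ξ) / cU with hδdef
    have hδ : 0 < δ := div_pos (by linarith) hcU
    have hU'low : ∀ t ∈ Icc (0:ℝ) 1, δ - L * |u t| ≤ U' t := by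
      intro t ht
      have e : U' t = (η - ξ) / wsCb c t - (wsD c t / wsCb c t) *
          (sin (wsTheta c (v η) η t) * cos (wsTheta c (v η) η t) -
           sin (wsTheta c (v ξ) ξ t) * cos (wsTheta c (v ξ) ξ t)) := by
        simp only [hU'def]
        rw [wsClamp ht]
        exact hdiff ξ η hξ hη t ht
      rw [e]
      have h1 : δ ≤ (η - ξ) / wsCb c t :=
        div_le_div_of_nonneg_left (by linarith) (hcbpos t) (hcbU t)
      have h2 : |(wsD c t / wsCb c t) *
          (sin (wsTheta c (v η) η t) * cos (wsTheta c (v η) η t) -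
           sin (wsTheta c (v ξ) ξ t) * cos (wsTheta c (v ξ) ξ t))| ≤ L * |u t| := by
        rw [abs_mul]
        have h3 : |wsD c t / wsCb c t| ≤ B / cL := by
          rw [abs_div, abs_of_pos (hcbpos t)]
          exact div_le_div₀ (by positivity) (hB t ht) hcL (hcb t)
        have h4 := wsSC (wsTheta c (v η) η t) (wsTheta c (v ξ) ξ t)
        calc |wsD c t / wsCb c t| * |sin (wsTheta c (v η) η t) * cos (wsTheta c (v η) η t) -
              sin (wsTheta c (v ξ) ξ t) * cos (wsTheta c (v ξ) ξ t)|
            ≤ (B / cL) * |u t| := mul_le_mul h3 h4 (abs_nonneg _) (by positivity)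
          _ ≤ L * |u t| := by
              apply mul_le_mul_of_nonneg_right _ (abs_nonneg _)
              rw [hLdef]; linarith
      have h5 := (abs_le.1 h2).2
      linarith
    -- positivity propagation
    have hGmono : ∀ q, q ∈ Icc (0:ℝ) 1 → (∀ y ∈ Icc (0:ℝ) q, 0 ≤ u y) → 0 < q → 0 < u q := by
      intro q hq hnonneg hq0
      set G : ℝ → ℝ := fun t => u t * Real.exp (L * t) with hGdef
      have hGd : ∀ t, HasDerivAt G
          (U' t * Real.exp (L * t) + u t * (L * Real.exp (L * t))) t := by
        intro t
        have hinner : HasDerivAt (fun s : ℝ => L * s) L t := by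
          simpa using (hasDerivAt_id t).const_mul L
        have he : HasDerivAt (fun s : ℝ => Real.exp (L * s)) (Real.exp (L * t) * L) t :=
          hinner.exp
        have h7 : HasDerivAt (fun y => u y * Real.exp (L * y)) _ t := (huD t).mul he
        convert h7 using 1
        ring
      have hGmono' : StrictMonoOn G (Icc 0 q) := by
        have hGc : Continuous G := by
          apply Continuous.mul huc
          exact Real.continuous_exp.comp (continuous_const.mul continuous_id')
        apply strictMonoOn_of_deriv_pos (convex_Icc 0 q) hGc.continuousOn
        intro t ht
        rw [interior_Icc] at ht
        have hdg := (hGd t).deriv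
        rw [hdg]
        have htI : t ∈ Icc (0:ℝ) 1 := ⟨ht.1.le, le_trans ht.2.le hq.2⟩
        have h5 := hU'low t htI
        have h6 : 0 ≤ u t := hnonneg t ⟨ht.1.le, ht.2.le⟩
        rw [abs_of_nonneg h6] at h5
        have h8 : 0 < Real.exp (L * t) := Real.exp_pos _
        have h9 : (δ - L * u t) * Real.exp (L * t) ≤ U' t * Real.exp (L * t) :=
          mul_le_mul_of_nonneg_right h5 h8.le
        nlinarith
      have h10 := hGmono' (left_mem_Icc.2 hq0.le) (right_mem_Icc.2 hq0.le) hq0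
      have h11 : G 0 = 0 := by simp [hGdef, hu0]
      rw [h11] at h10
      have h12 : 0 < Real.exp (L * q) := Real.exp_pos _
      by_contra hcon
      push_neg at hcon
      have : G q ≤ 0 := mul_nonpos_of_nonpos_of_nonneg hcon h12.le
      linarith
    -- nonnegativity on [0,1]
    have hnn : ∀ y ∈ Icc (0:ℝ) 1, 0 ≤ u y := by
      by_contra hcon
      push_neg at hcon
      obtain ⟨y0, hy0, hy0neg⟩ := hcon
      set A := {x ∈ Icc (0:ℝ) 1 | ∀ y ∈ Icc (0:ℝ) x, 0 ≤ u y} with hAdef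
      have hA0 : (0:ℝ) ∈ A := ⟨⟨le_rfl, zero_le_one⟩, fun y hy => by
        have hy' : y = 0 := le_antisymm hy.2 hy.1
        rw [hy', hu0]⟩
      have hAne : A.Nonempty := ⟨0, hA0⟩
      have hAbdd : BddAbove A := ⟨1, fun x hx => hx.1.2⟩
      set m := sSup A with hmdef
      have hm0 : 0 ≤ m := le_csSup hAbdd hA0
      have hm1 : m ≤ 1 := csSup_le hAne (fun x hx => hx.1.2)
      have hmlt : ∀ y, 0 ≤ y → y < m → 0 ≤ u y := by
        intro y hy hym
        obtain ⟨a, ha, hya⟩ := exists_lt_of_lt_csSup hAne hym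
        exact ha.2 y ⟨hy, hya.le⟩
      have hum : ∀ y ∈ Icc (0:ℝ) m, 0 ≤ u y := by
        intro y hy
        rcases lt_or_eq_of_le hy.2 with h | h
        · exact hmlt y hy.1 h
        · rw [h]
          rcases eq_or_lt_of_le hm0 with h0 | h0
          · rw [← h0, hu0]
          · have htend : Filter.Tendsto u (nhdsWithin m (Iio m)) (nhds (u m)) :=
              (huc.tendsto m).mono_left nhdsWithin_le_nhds
            have hev : ∀ᶠ z in nhdsWithin m (Iio m), 0 ≤ u z := by
              filter_upwards [Ioo_mem_nhdsLT_of_mem (⟨h0, le_rfl⟩ : m ∈ Ioc (0:ℝ) m)]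
                with z hz
              exact hmlt z hz.1.le hz.2
            exact ge_of_tendsto htend hev
      have hmA : m ∈ A := ⟨⟨hm0, hm1⟩, hum⟩
      have hm1' : m = 1 := by
        by_contra hne
        have hmlt1 : m < 1 := lt_of_le_of_ne hm1 hne
        rcases eq_or_lt_of_le hm0 with h0 | h0
        · -- m = 0
          have h00 : (0:ℝ) ∈ Icc (0:ℝ) 1 := ⟨le_rfl, zero_le_one⟩
          have hD0 : U' 0 = (η - ξ) / wsCb c 0 := by
            have e := hdiff ξ η hξ hη 0 h00
            simp only [hU'def]
            rw [wsClamp h00, e, hθ0a, hθ0b]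
            simp
          have hD0pos : 0 < U' 0 := by
            rw [hD0]; exact div_pos (by linarith) (hcbpos 0)
          have hev := wsPosRight (huD 0) hu0 hD0pos
          obtain ⟨b, hb, hbsub⟩ := mem_nhdsGT_iff_exists_Ioo_subset.1 hev
          have hbpos : (0:ℝ) < b := hb
          have hposIoo : ∀ z ∈ Ioo (0:ℝ) b, 0 < u z := fun z hz => hbsub hz
          set a0 : ℝ := min (b/2) 1 with ha0def
          have ha0pos : 0 < a0 := lt_min (by linarith) one_pos
          have ha0A : a0 ∈ A := by
            refine ⟨⟨ha0pos.le, min_le_right _ _⟩, ?_⟩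
            intro y hy
            rcases eq_or_lt_of_le hy.1 with hy0' | hy0'
            · rw [← hy0', hu0]
            · apply (hposIoo y ⟨hy0', ?_⟩).le
              calc y ≤ a0 := hy.2
                _ ≤ b/2 := min_le_left _ _
                _ < b := by linarith
          have := le_csSup hAbdd ha0A
          rw [← hmdef] at this
          rw [← h0] at this
          linarith
        · -- 0 < m
          have hump : 0 < u m := hGmono m ⟨hm0, hm1⟩ hum h0
          have hev : ∀ᶠ z in nhds m, 0 < u z :=
            (huc.tendsto m).eventually (eventually_gt_nhds hump)
          obtain ⟨ε, hεpos, hball⟩ := Metric.eventually_nhds_iff.1 hev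
          set a0 : ℝ := min (m + ε/2) 1 with ha0def
          have ha0m : m < a0 := lt_min (by linarith) hmlt1
          have ha0A : a0 ∈ A := by
            refine ⟨⟨le_trans hm0 ha0m.le, min_le_right _ _⟩, ?_⟩
            intro y hy
            rcases le_or_gt y m with hym | hym
            · exact hum y ⟨hy.1, hym⟩
            · apply (hball ?_).le
              rw [Real.dist_eq, abs_of_pos (by linarith)]
              calc y - m ≤ a0 - m := by linarith [hy.2]
                _ ≤ (m + ε/2) - m := by
                    have := min_le_left (m + ε/2) 1
                    linarith
                _ < ε := by linarith
          have := le_csSup hAbdd ha0A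
          rw [← hmdef] at this
          linarith
      have := hum y0 (by rw [hm1']; exact hy0)
      linarith
    have hu1 : 0 < u 1 := hGmono 1 ⟨zero_le_one, le_rfl⟩ hnn one_pos
    simp only [hudef] at hu1
    exact sub_pos.1 hu1
  -- Lipschitz
  set Klip : ℝ := (Real.exp L - 1) / (L * cL) with hKlipdef
  have hexpL : L + 1 ≤ Real.exp L := by
    have := Real.add_one_le_exp L
    linarith
  have hKlip0 : 0 ≤ Klip := by
    apply div_nonneg (by linarith) (by positivity)
  have hLip : ∀ ξ η : ℝ, 0 < ξ → 0 < η → |F η - F ξ| ≤ Klip * |η - ξ| := by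
    intro ξ η hξ hη
    obtain ⟨hθ0a, hθda, hP3a, _, _⟩ := core ξ hξ
    obtain ⟨hθ0b, hθdb, hP3b, _, _⟩ := core η hη
    set u : ℝ → ℝ := fun t => wsTheta c (v η) η t - wsTheta c (v ξ) ξ t with hudef
    have hu0 : u 0 = 0 := by simp [hudef, hθ0a, hθ0b]
    set U' : ℝ → ℝ := fun t =>
      wsPhi c (v η) η (min (max t 0) 1) - wsPhi c (v ξ) ξ (min (max t 0) 1) with hU'def
    have huD : ∀ t, HasDerivAt u (U' t) t := fun t => (hθdb t).sub (hθda t)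
    have huc : Continuous u := Differentiable.continuous (fun t => (huD t).differentiableAt)
    set ε : ℝ := |η - ξ| / cL with hεdef
    have hbound : ∀ t ∈ Ico (0:ℝ) 1, ‖U' t‖ ≤ L * ‖u t‖ + ε := by
      intro t ht
      have htI : t ∈ Icc (0:ℝ) 1 := ⟨ht.1, ht.2.le⟩
      have e : U' t = (η - ξ) / wsCb c t - (wsD c t / wsCb c t) *
          (sin (wsTheta c (v η) η t) * cos (wsTheta c (v η) η t) -
           sin (wsTheta c (v ξ) ξ t) * cos (wsTheta c (v ξ) ξ t)) := by
        simp only [hU'def]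
        rw [wsClamp htI]
        exact hdiff ξ η hξ hη t htI
      rw [Real.norm_eq_abs, Real.norm_eq_abs, e]
      have h1 : |(η - ξ) / wsCb c t| ≤ ε := by
        rw [abs_div, abs_of_pos (hcbpos t), hεdef]
        exact div_le_div₀ (abs_nonneg _) le_rfl hcL (hcb t)
      have h2 : |(wsD c t / wsCb c t) *
          (sin (wsTheta c (v η) η t) * cos (wsTheta c (v η) η t) -
           sin (wsTheta c (v ξ) ξ t) * cos (wsTheta c (v ξ) ξ t))| ≤ L * |u t| := by
        rw [abs_mul]
        have h3 : |wsD c t / wsCb c t| ≤ B / cL := by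
          rw [abs_div, abs_of_pos (hcbpos t)]
          exact div_le_div₀ (by positivity) (hB t htI) hcL (hcb t)
        have h4 := wsSC (wsTheta c (v η) η t) (wsTheta c (v ξ) ξ t)
        calc |wsD c t / wsCb c t| * |sin (wsTheta c (v η) η t) * cos (wsTheta c (v η) η t) -
              sin (wsTheta c (v ξ) ξ t) * cos (wsTheta c (v ξ) ξ t)|
            ≤ (B / cL) * |u t| := mul_le_mul h3 h4 (abs_nonneg _) (by positivity)
          _ ≤ L * |u t| := by
              apply mul_le_mul_of_nonneg_right _ (abs_nonneg _)
              rw [hLdef]; linarith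
      calc |(η - ξ) / wsCb c t - (wsD c t / wsCb c t) *
          (sin (wsTheta c (v η) η t) * cos (wsTheta c (v η) η t) -
           sin (wsTheta c (v ξ) ξ t) * cos (wsTheta c (v ξ) ξ t))|
          ≤ |(η - ξ) / wsCb c t| + |(wsD c t / wsCb c t) *
          (sin (wsTheta c (v η) η t) * cos (wsTheta c (v η) η t) -
           sin (wsTheta c (v ξ) ξ t) * cos (wsTheta c (v ξ) ξ t))| := abs_sub _ _
        _ ≤ L * |u t| + ε := by linarith
    have hg := norm_le_gronwallBound_of_norm_deriv_right_le (f := u) (f' := U')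
      (δ := 0) (K := L) (ε := ε) (a := 0) (b := 1) huc.continuousOn
      (fun t ht => (huD t).hasDerivWithinAt) (by simp [hu0]) hbound
    have h1 := hg 1 ⟨zero_le_one, le_rfl⟩
    simp only [gronwallBound_of_K_ne_0 hL.ne'] at h1
    have he : (0:ℝ) * Real.exp (L * (1 - 0)) + ε / L * (Real.exp (L * (1 - 0)) - 1)
        = Klip * |η - ξ| := by
      rw [hKlipdef, hεdef]
      field_simp
      ring
    rw [he] at h1
    have hu1 : u 1 = F η - F ξ := rfl
    rw [hu1, Real.norm_eq_abs] at h1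
    exact h1
  -- zero characterization
  have hZero : ∀ ξ : ℝ, 0 < ξ → (v ξ 1 = 0 ↔ ∃ n : ℤ, (n:ℝ) * π = F ξ) := by
    intro ξ hξ
    obtain ⟨_, _, _, hP4, _⟩ := core ξ hξ
    rw [hP4]
    exact Real.sin_eq_zero_iff
  -- assemble
  have hKlipB : (0:ℝ) < B / (2*cL) + Klip + 1 := by positivity
  refine ⟨T, B / (2*cL) + Klip + 1, F, hTeq, hT, hKlipB, hMono, ?_, ?_, hZero⟩
  · intro ξ η hξ hη
    calc |F η - F ξ| ≤ Klip * |η - ξ| := hLip ξ η hξ hη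
      _ ≤ (B / (2*cL) + Klip + 1) * |η - ξ| := by
          apply mul_le_mul_of_nonneg_right _ (abs_nonneg _)
          have : 0 ≤ B / (2*cL) := by positivity
          linarith
  · intro ξ hξ
    have h1 := hFbound ξ hξ
    have h2 : B / (2*cL) ≤ B / (2*cL) + Klip + 1 := by linarith
    linarith

/-- if the Dirichlet spectra (zeros of `ξ ↦ v_c(ξ,1)` for `ξ > 0`) of the
two media coincide, then the total travel times coincide. -/
theorem statement6
    (c0 : ℝ) (hc0 : 0 < c0)
    (c₁ c₂ : ℝ → ℝ) (hc₁ : IsWaveSpeed c0 c₁) (hc₂ : IsWaveSpeed c0 c₂)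
    (v₁ v₂ : ℝ → ℝ → ℝ)
    (hv₁ : IsRealFreqSolution c₁ v₁) (hv₂ : IsRealFreqSolution c₂ v₂)
    (hzeros : ∀ ξ > (0:ℝ), (v₁ ξ 1 = 0 ↔ v₂ ξ 1 = 0)) :
    ∫ x in (0:ℝ)..1, (c₁ x)⁻¹ = ∫ x in (0:ℝ)..1, (c₂ x)⁻¹ := by
  obtain ⟨T₁, K₁, F₁, hTeq₁, hT₁, hK₁, hMono₁, hLip₁, hBd₁, hZ₁⟩ := wsMain hc0 hc₁ hv₁
  obtain ⟨T₂, K₂, F₂, hTeq₂, hT₂, hK₂, hMono₂, hLip₂, hBd₂, hZ₂⟩ := wsMain hc0 hc₂ hv₂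
  have hπ : (0:ℝ) < π := Real.pi_pos
  -- continuity from Lipschitz
  have hcont : ∀ (F : ℝ → ℝ) (K : ℝ), 0 < K →
      (∀ ξ η, 0 < ξ → 0 < η → |F η - F ξ| ≤ K * |η - ξ|) →
      ∀ a b : ℝ, 0 < a → ContinuousOn F (Icc a b) := by
    intro F K hK hL a b ha
    have : LipschitzOnWith (Real.toNNReal K) F (Icc a b) := by
      rw [lipschitzOnWith_iff_dist_le_mul]
      intro x hx y hy
      rw [Real.dist_eq, Real.dist_eq, Real.coe_toNNReal _ hK.le]
      exact hL y x (lt_of_lt_of_le ha hy.1) (lt_of_lt_of_le ha hx.1)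
    exact this.continuousOn
  have hcont₁ := hcont F₁ K₁ hK₁ hLip₁
  have hcont₂ := hcont F₂ K₂ hK₂ hLip₂
  -- choose n₀
  obtain ⟨n₀, hn₀⟩ := exists_nat_gt (max (F₁ 1) T₁ / π)
  have hn₀' : max (F₁ 1) T₁ < (n₀:ℝ) * π := by
    rwa [div_lt_iff₀ hπ] at hn₀
  -- existence of zeros of F₁ - nπ
  have hex : ∀ n : ℕ, ∃ x, 1 ≤ x ∧ F₁ x = ((n + n₀ : ℕ):ℝ) * π := by
    intro n
    set y : ℝ := ((n + n₀ : ℕ):ℝ) * π with hydef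
    have hy0 : (n₀:ℝ) * π ≤ y := by
      rw [hydef]
      apply mul_le_mul_of_nonneg_right _ hπ.le
      push_cast
      linarith [Nat.cast_nonneg (α := ℝ) n]
    have hy1 : F₁ 1 ≤ y := le_trans (le_trans (le_max_left _ _) hn₀'.le) hy0
    have hyT : T₁ ≤ y := le_trans (le_trans (le_max_right _ _) hn₀'.le) hy0
    set b : ℝ := (y + K₁) / T₁ with hbdef
    have hb1 : 1 ≤ b := by
      rw [hbdef, le_div_iff₀ hT₁]
      linarith
    have hbT : b * T₁ = y + K₁ := by
      rw [hbdef]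
      field_simp
    have hFb : y ≤ F₁ b := by
      have := hBd₁ b (by linarith)
      have h2 := (abs_le.1 this).1
      linarith [hbT ▸ h2]
    have hsub := intermediate_value_Icc hb1 (hcont₁ 1 b one_pos)
    obtain ⟨x, hxmem, hxval⟩ := hsub ⟨hy1, hFb⟩
    exact ⟨x, hxmem.1, hxval⟩
  choose Ξ hΞ1 hΞF using hex
  have hΞpos : ∀ n, 0 < Ξ n := fun n => lt_of_lt_of_le one_pos (hΞ1 n)
  -- strict monotonicity of Ξ
  have hΞmono : ∀ n : ℕ, Ξ n < Ξ (n+1) := by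
    intro n
    rcases lt_trichotomy (Ξ n) (Ξ (n+1)) with h | h | h
    · exact h
    · exfalso
      have := hΞF n
      rw [h, hΞF (n+1)] at this
      have h2 : ((n+1+n₀ : ℕ):ℝ) = ((n+n₀:ℕ):ℝ) := by
        exact mul_right_cancel₀ hπ.ne' this
      push_cast at h2
      linarith
    · exfalso
      have h2 := hMono₁ _ _ (hΞpos (n+1)) h
      rw [hΞF n, hΞF (n+1)] at h2
      have h3 : ((n+n₀ : ℕ):ℝ) < ((n+1+n₀:ℕ):ℝ) := by push_cast; linarith
      nlinarith
  -- zeros transfer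
  have hz2 : ∀ n : ℕ, v₂ (Ξ n) 1 = 0 := by
    intro n
    apply (hzeros (Ξ n) (hΞpos n)).1
    apply (hZ₁ (Ξ n) (hΞpos n)).2
    exact ⟨(n + n₀ : ℕ), by rw [hΞF n]; push_cast; ring⟩
  have hm : ∀ n : ℕ, ∃ k : ℤ, (k:ℝ) * π = F₂ (Ξ n) :=
    fun n => (hZ₂ (Ξ n) (hΞpos n)).1 (hz2 n)
  choose M hM using hm
  -- M is strictly increasing by exactly 1
  have hMsucc : ∀ n : ℕ, M (n+1) = M n + 1 := by
    intro n
    have hlt : F₂ (Ξ n) < F₂ (Ξ (n+1)) := hMono₂ _ _ (hΞpos n) (hΞmono n)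
    have hMlt : M n < M (n+1) := by
      rw [← hM n, ← hM (n+1)] at hlt
      have := lt_of_mul_lt_mul_right hlt hπ.le
      exact_mod_cast this
    by_contra hne
    have hge : M n + 2 ≤ M (n+1) := by omega
    -- intermediate value gives an extra zero
    have hmid : ((M n + 1 : ℤ):ℝ) * π ∈ Ioo (F₂ (Ξ n)) (F₂ (Ξ (n+1))) := by
      constructor
      · rw [← hM n]
        apply mul_lt_mul_of_pos_right _ hπ
        exact_mod_cast lt_add_one (M n)
      · rw [← hM (n+1)]
        apply mul_lt_mul_of_pos_right _ hπ
        exact_mod_cast by omega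
    have hsub := intermediate_value_Ioo (hΞmono n).le (hcont₂ (Ξ n) (Ξ (n+1)) (hΞpos n))
    obtain ⟨ζ, hζmem, hζval⟩ := hsub hmid
    have hζpos : 0 < ζ := lt_trans (hΞpos n) hζmem.1
    have hζz2 : v₂ ζ 1 = 0 := (hZ₂ ζ hζpos).2 ⟨M n + 1, by rw [hζval]⟩
    have hζz1 : v₁ ζ 1 = 0 := (hzeros ζ hζpos).2 hζz2
    obtain ⟨k, hk⟩ := (hZ₁ ζ hζpos).1 hζz1
    -- k strictly between n+n₀ and n+1+n₀
    have h1 : F₁ (Ξ n) < F₁ ζ := hMono₁ _ _ (hΞpos n) hζmem.1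
    have h2 : F₁ ζ < F₁ (Ξ (n+1)) := hMono₁ _ _ hζpos hζmem.2
    rw [hΞF n, ← hk] at h1
    rw [hΞF (n+1), ← hk] at h2
    have h3 : ((n+n₀:ℕ):ℝ) < (k:ℝ) := lt_of_mul_lt_mul_right h1 hπ.le
    have h4 : (k:ℝ) < ((n+1+n₀:ℕ):ℝ) := lt_of_mul_lt_mul_right h2 hπ.le
    have h5 : ((n:ℤ) + n₀) < k := by exact_mod_cast h3
    have h6 : k < ((n:ℤ) + 1 + n₀) := by exact_mod_cast h4
    omega
  have hMlin : ∀ n : ℕ, M n = M 0 + n := by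
    intro n
    induction n with
    | zero => simp
    | succ k ih => rw [hMsucc k, ih]; push_cast; ring
  -- the two asymptotic bounds
  have hb1 : ∀ n : ℕ, |Ξ n * T₁ - ((n+n₀:ℕ):ℝ)*π| ≤ K₁ := by
    intro n
    have := hBd₁ (Ξ n) (hΞpos n)
    rw [hΞF n] at this
    rwa [abs_sub_comm] at this
  have hb2 : ∀ n : ℕ, |Ξ n * T₂ - ((M 0 : ℝ) + n)*π| ≤ K₂ := by
    intro n
    have := hBd₂ (Ξ n) (hΞpos n)
    rw [← hM n, hMlin n] at this
    rw [abs_sub_comm] at this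
    convert this using 3
    push_cast
    ring
  -- conclude T₁ = T₂
  have hTT : T₁ = T₂ := by
    by_contra hne
    have hD : 0 < |T₂ - T₁| := abs_pos.2 (sub_ne_zero.2 (Ne.symm hne))
    set C : ℝ := K₁*T₂ + K₂*T₁ + π * |(n₀:ℝ)*T₂ - (M 0 : ℝ)*T₁| with hCdef
    have hCb : ∀ n : ℕ, (n:ℝ) * π * |T₂ - T₁| ≤ C := by
      intro n
      have h1 : |Ξ n * T₁ * T₂ - ((n+n₀:ℕ):ℝ)*π*T₂| ≤ K₁*T₂ := by
        have h0 := mul_le_mul_of_nonneg_right (hb1 n) hT₂.le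
        rwa [show Ξ n * T₁ * T₂ - ((n+n₀:ℕ):ℝ)*π*T₂
          = (Ξ n * T₁ - ((n+n₀:ℕ):ℝ)*π)*T₂ by ring, abs_mul, abs_of_pos hT₂]
      have h2 : |Ξ n * T₂ * T₁ - ((M 0 : ℝ) + n)*π*T₁| ≤ K₂*T₁ := by
        have h0 := mul_le_mul_of_nonneg_right (hb2 n) hT₁.le
        rwa [show Ξ n * T₂ * T₁ - ((M 0 : ℝ) + n)*π*T₁
          = (Ξ n * T₂ - ((M 0 : ℝ) + n)*π)*T₁ by ring, abs_mul, abs_of_pos hT₁]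
      have h3 : |((n+n₀:ℕ):ℝ)*π*T₂ - ((M 0 : ℝ) + n)*π*T₁| ≤ K₁*T₂ + K₂*T₁ := by
        have h4 := abs_sub (Ξ n * T₁ * T₂ - ((n+n₀:ℕ):ℝ)*π*T₂)
          (Ξ n * T₂ * T₁ - ((M 0 : ℝ) + n)*π*T₁)
        have h5 : (Ξ n * T₂ * T₁ - ((M 0 : ℝ) + n)*π*T₁) -
            (Ξ n * T₁ * T₂ - ((n+n₀:ℕ):ℝ)*π*T₂)
            = ((n+n₀:ℕ):ℝ)*π*T₂ - ((M 0 : ℝ) + n)*π*T₁ := by ring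
        calc |((n+n₀:ℕ):ℝ)*π*T₂ - ((M 0 : ℝ) + n)*π*T₁|
            = |(Ξ n * T₂ * T₁ - ((M 0 : ℝ) + n)*π*T₁) -
              (Ξ n * T₁ * T₂ - ((n+n₀:ℕ):ℝ)*π*T₂)| := by rw [h5]
          _ ≤ |Ξ n * T₂ * T₁ - ((M 0 : ℝ) + n)*π*T₁| +
              |Ξ n * T₁ * T₂ - ((n+n₀:ℕ):ℝ)*π*T₂| := abs_sub _ _
          _ ≤ K₁*T₂ + K₂*T₁ := by linarith
      have h6 : ((n+n₀:ℕ):ℝ)*π*T₂ - ((M 0 : ℝ) + n)*π*T₁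
          = (n:ℝ)*π*(T₂ - T₁) + π*((n₀:ℝ)*T₂ - (M 0 : ℝ)*T₁) := by
        push_cast
        ring
      rw [h6] at h3
      have h7 : |(n:ℝ)*π*(T₂ - T₁)| - |π*((n₀:ℝ)*T₂ - (M 0 : ℝ)*T₁)|
          ≤ |(n:ℝ)*π*(T₂ - T₁) + π*((n₀:ℝ)*T₂ - (M 0 : ℝ)*T₁)| := by
        have := abs_add_le ((n:ℝ)*π*(T₂ - T₁) + π*((n₀:ℝ)*T₂ - (M 0 : ℝ)*T₁))
          (-(π*((n₀:ℝ)*T₂ - (M 0 : ℝ)*T₁)))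
        simp only [add_neg_cancel_right, abs_neg] at this
        linarith
      have h8 : |(n:ℝ)*π*(T₂ - T₁)| = (n:ℝ)*π*|T₂ - T₁| := by
        rw [abs_mul]
        congr 1
        rw [abs_of_nonneg (by positivity)]
      have h9 : |π*((n₀:ℝ)*T₂ - (M 0 : ℝ)*T₁)| = π * |(n₀:ℝ)*T₂ - (M 0 : ℝ)*T₁| := by
        rw [abs_mul, abs_of_pos hπ]
      rw [h8, h9] at h7
      rw [hCdef]
      linarith
    obtain ⟨n, hn⟩ := exists_nat_gt (C / (π * |T₂ - T₁|))
    have h10 : C < (n:ℝ) * (π * |T₂ - T₁|) := by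
      rwa [div_lt_iff₀ (by positivity)] at hn
    have := hCb n
    nlinarith
  rw [← hTeq₁, ← hTeq₂, hTT]
end

section
/- Let L > 0 and let c̃_1, c̃_2 ∈ C²([0,L]) be positive functions satisfying c̃_1(y)^{1/2}·(d²/dy²)(c̃_1(y)^{−1/2}) = c̃_2(y)^{1/2}·(d²/dy²)(c̃_2(y)^{−1/2}) for all y ∈ [0,L], together with c̃_1(0) = c̃_2(0) and c̃_1(L) = c̃_2(L). Then c̃_1(y) = c̃_2(y) for all y ∈ [0,L]. -/
open Set

/-- the Liouville potential `c̃^{1/2} (c̃^{-1/2})''` together with the two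
boundary values determines a positive `C²` speed on `[0,L]`. -/
theorem statement8
    (L : ℝ) (hL : 0 < L)
    (c₁ c₂ : ℝ → ℝ)
    (hc₁C : ContDiffOn ℝ 2 c₁ (Icc 0 L)) (hc₂C : ContDiffOn ℝ 2 c₂ (Icc 0 L))
    (hc₁pos : ∀ y ∈ Icc (0:ℝ) L, 0 < c₁ y) (hc₂pos : ∀ y ∈ Icc (0:ℝ) L, 0 < c₂ y)
    (hq : ∀ y ∈ Icc (0:ℝ) L,
      Real.sqrt (c₁ y) *
          derivWithin (derivWithin (fun z => (Real.sqrt (c₁ z))⁻¹) (Icc 0 L)) (Icc 0 L) y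
        = Real.sqrt (c₂ y) *
          derivWithin (derivWithin (fun z => (Real.sqrt (c₂ z))⁻¹) (Icc 0 L)) (Icc 0 L) y)
    (h0 : c₁ 0 = c₂ 0) (hLval : c₁ L = c₂ L) :
    ∀ y ∈ Icc (0:ℝ) L, c₁ y = c₂ y := by
  set s : Set ℝ := Icc (0:ℝ) L with hs_def
  have hsu : UniqueDiffOn ℝ s := uniqueDiffOn_Icc hL
  set u : ℝ → ℝ := fun z => (Real.sqrt (c₁ z))⁻¹ with hu_def
  set v : ℝ → ℝ := fun z => (Real.sqrt (c₂ z))⁻¹ with hv_def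
  have h0s : (0:ℝ) ∈ s := left_mem_Icc.2 hL.le
  have hLs : L ∈ s := right_mem_Icc.2 hL.le
  have hupos : ∀ y ∈ s, 0 < u y := fun y hy => inv_pos.2 (Real.sqrt_pos.2 (hc₁pos y hy))
  have hvpos : ∀ y ∈ s, 0 < v y := fun y hy => inv_pos.2 (Real.sqrt_pos.2 (hc₂pos y hy))
  have huC : ContDiffOn ℝ 2 u s :=
    (hc₁C.sqrt (fun x hx => (hc₁pos x hx).ne')).inv
      (fun x hx => (Real.sqrt_pos.2 (hc₁pos x hx)).ne')
  have hvC : ContDiffOn ℝ 2 v s :=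
    (hc₂C.sqrt (fun x hx => (hc₂pos x hx).ne')).inv
      (fun x hx => (Real.sqrt_pos.2 (hc₂pos x hx)).ne')
  have hud : DifferentiableOn ℝ u s := huC.differentiableOn two_ne_zero
  have hvd : DifferentiableOn ℝ v s := hvC.differentiableOn two_ne_zero
  have hu'd : DifferentiableOn ℝ (derivWithin u s) s :=
    (huC.derivWithin hsu (by norm_num)).differentiableOn one_ne_zero
  have hv'd : DifferentiableOn ℝ (derivWithin v s) s :=
    (hvC.derivWithin hsu (by norm_num)).differentiableOn one_ne_zero
  -- key cross relation: v * u'' = u * v''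
  have key : ∀ y ∈ s, v y * derivWithin (derivWithin u s) s y
      = u y * derivWithin (derivWithin v s) s y := by
    intro y hy
    have h1 := hq y hy
    have hs1 : Real.sqrt (c₁ y) = (u y)⁻¹ := by rw [hu_def]; simp
    have hs2 : Real.sqrt (c₂ y) = (v y)⁻¹ := by rw [hv_def]; simp
    rw [hs1, hs2] at h1
    have hu0 := (hupos y hy).ne'
    have hv0 := (hvpos y hy).ne'
    field_simp at h1
    linarith [h1]
  -- Wronskian-type function
  set g : ℝ → ℝ := fun y => derivWithin v s y * u y - v y * derivWithin u s y with hg_def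
  have hgdiff : DifferentiableOn ℝ g s := (hv'd.mul hud).sub (hvd.mul hu'd)
  have hg0 : ∀ y ∈ s, derivWithin g s y = 0 := by
    intro y hy
    have hUD := hsu y hy
    rw [hg_def]
    rw [derivWithin_fun_sub (f := fun y => derivWithin v s y * u y)
        (g := fun y => v y * derivWithin u s y) ((hv'd y hy).mul (hud y hy)) ((hvd y hy).mul (hu'd y hy)),
      derivWithin_fun_mul (hv'd y hy) (hud y hy),
      derivWithin_fun_mul (hvd y hy) (hu'd y hy)]
    have hk := key y hy
    linarith [hk]
  have hgconst : ∀ y ∈ s, g y = g 0 := by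
    intro y hy
    exact constant_of_derivWithin_zero hgdiff (fun x hx => hg0 x (Ico_subset_Icc_self hx)) y hy
  -- the ratio r = v/u
  set r : ℝ → ℝ := fun y => v y * (u y)⁻¹ with hr_def
  have hrdiff : DifferentiableOn ℝ r s :=
    hvd.mul (hud.inv (fun x hx => (hupos x hx).ne'))
  have hr' : ∀ y ∈ s, derivWithin r s y
      = derivWithin v s y * (u y)⁻¹ + v y * (-derivWithin u s y / u y ^ 2) := by
    intro y hy
    have hUD := hsu y hy
    rw [hr_def, derivWithin_fun_mul (d := fun y => (u y)⁻¹) (hvd y hy) ((hud y hy).inv (hupos y hy).ne'),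
      derivWithin_fun_inv' (hud y hy) (hupos y hy).ne']
  have huv0 : u 0 = v 0 := by rw [hu_def, hv_def]; simp [h0]
  have huvL : u L = v L := by rw [hu_def, hv_def]; simp [hLval]
  have hr0L : r 0 = r L := by
    rw [hr_def]
    simp only [← huv0, ← huvL]
    rw [mul_inv_cancel₀ (hupos 0 h0s).ne', mul_inv_cancel₀ (hupos L hLs).ne']
  obtain ⟨ξ, hξ, hdξ⟩ := exists_deriv_eq_zero hL hrdiff.continuousOn hr0L
  have hξs : ξ ∈ s := Ioo_subset_Icc_self hξ
  have hrws : derivWithin r s ξ = 0 := by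
    rw [derivWithin_of_mem_nhds (Icc_mem_nhds hξ.1 hξ.2)]; exact hdξ
  -- g vanishes at ξ hence everywhere
  have hgξ : g ξ = 0 := by
    have h1 := hr' ξ hξs
    rw [hrws] at h1
    have hu0 := (hupos ξ hξs).ne'
    field_simp at h1
    show derivWithin v s ξ * u ξ - v ξ * derivWithin u s ξ = 0
    rcases mul_eq_zero.1 (show (derivWithin v s ξ * u ξ - v ξ * derivWithin u s ξ) * u ξ = 0 by
      linear_combination -(u ξ) * h1) with h3 | h3
    · exact h3
    · exact absurd h3 hu0
  have hgzero : ∀ y ∈ s, g y = 0 := by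
    intro y hy
    rw [hgconst y hy, ← hgconst ξ hξs, hgξ]
  -- hence r' = 0 everywhere, so r is constant equal to 1
  have hr'0 : ∀ y ∈ s, derivWithin r s y = 0 := by
    intro y hy
    rw [hr' y hy]
    have hgy := hgzero y hy
    simp only [hg_def] at hgy
    have h3 : derivWithin v s y * u y = v y * derivWithin u s y := by linear_combination hgy
    have hu0 := (hupos y hy).ne'
    field_simp
    linear_combination h3
  have hrconst : ∀ y ∈ s, r y = r 0 :=
    fun y hy => constant_of_derivWithin_zero hrdiff
      (fun x hx => hr'0 x (Ico_subset_Icc_self hx)) y hy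
  have hr01 : r 0 = 1 := by
    rw [hr_def]; simp only [← huv0]; exact mul_inv_cancel₀ (hupos 0 h0s).ne'
  -- conclude
  intro y hy
  have huv : u y = v y := by
    have := hrconst y hy
    rw [hr01, hr_def] at this
    have hu0 := (hupos y hy).ne'
    field_simp at this
    linarith [this]
  have hsqrt : Real.sqrt (c₁ y) = Real.sqrt (c₂ y) := by
    have : (Real.sqrt (c₁ y))⁻¹ = (Real.sqrt (c₂ y))⁻¹ := huv
    exact inv_injective this
  calc c₁ y = Real.sqrt (c₁ y) ^ 2 := (Real.sq_sqrt (hc₁pos y hy).le).symm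
    _ = Real.sqrt (c₂ y) ^ 2 := by rw [hsqrt]
    _ = c₂ y := Real.sq_sqrt (hc₂pos y hy).le
end

section
/- Let {λ_k}_{k≥1} and {μ_k}_{k≥1} be strictly increasing sequences of real numbers with λ_k = (kπ)² + O(1) and μ_k = (kπ)² + O(1) as k → ∞, and let {a_k} and {b_k} be bounded sequences of real numbers. If Σ_{k≥1} a_k/(z + λ_k) = Σ_{k≥1} b_k/(z + μ_k) for every real z > max(−λ_1, −μ_1), then for every k with a_k ≠ 0 there exists l with λ_k = μ_l. -/
open Filter Topology

private lemma st12_summ (ν : ℕ → ℝ) (C : ℝ)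
    (hν : ∀ j, |ν j - (((j:ℝ) + 1) * Real.pi)^2| ≤ C)
    (A R δ : ℝ) (hδ : 0 < δ) :
    Summable (fun j => |A| / max δ (ν j - R)) := by
  set N : ℕ := ⌈C + R⌉₊ with hN
  rw [← summable_nat_add_iff N]
  have hbase : Summable (fun j : ℕ => |A| / ((j:ℝ)+1)^2) := by
    have h1 : Summable (fun j : ℕ => 1 / ((j:ℝ))^2) :=
      Real.summable_one_div_nat_pow.mpr one_lt_two
    have h2 : Summable (fun j : ℕ => 1 / ((j:ℝ)+1)^2) := by
      have := (summable_nat_add_iff 1).mpr h1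
      simpa using this
    simpa [div_eq_mul_inv, mul_comm] using h2.mul_left |A|
  apply Summable.of_nonneg_of_le (fun j => ?_) (fun j => ?_) hbase
  · have hpos : (0:ℝ) < max δ (ν (j + N) - R) := lt_of_lt_of_le hδ (le_max_left _ _)
    positivity
  · have hπ : Real.pi > 3 := Real.pi_gt_three
    have hνlb : (((j + N :ℕ):ℝ) + 1)^2 * Real.pi^2 - C ≤ ν (j + N) := by
      have := abs_le.1 (hν (j + N))
      nlinarith [this.1, this.2]
    have hCR : C + R ≤ (N:ℝ) := Nat.le_ceil _
    have hjN : ((j:ℝ)+1)^2 ≤ ν (j + N) - R := by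
      have hcast : ((j + N:ℕ):ℝ) = (j:ℝ) + (N:ℝ) := by push_cast; ring
      rw [hcast] at hνlb
      have h9 : (9:ℝ) ≤ Real.pi^2 := by nlinarith
      have hj0 : (0:ℝ) ≤ (j:ℝ) := Nat.cast_nonneg j
      have hN0 : (0:ℝ) ≤ (N:ℝ) := Nat.cast_nonneg N
      have key : ((j:ℝ)+1)^2 + (N:ℝ) ≤ ((j:ℝ)+(N:ℝ)+1)^2 := by nlinarith
      have key2 : (((j:ℝ)+1)^2 + (N:ℝ)) * Real.pi^2 ≤ ((j:ℝ)+(N:ℝ)+1)^2 * Real.pi^2 :=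
        mul_le_mul_of_nonneg_right key (by positivity)
      have key3 : (((j:ℝ)+1)^2 + (N:ℝ)) * 9 ≤ (((j:ℝ)+1)^2 + (N:ℝ)) * Real.pi^2 :=
        mul_le_mul_of_nonneg_left h9 (by positivity)
      nlinarith [sq_nonneg ((j:ℝ)+1)]
    have hle : ((j:ℝ)+1)^2 ≤ max δ (ν (j + N) - R) := le_max_of_le_right hjN
    have h0 : (0:ℝ) < ((j:ℝ)+1)^2 := by positivity
    exact div_le_div₀ (abs_nonneg A) le_rfl h0 hle

private lemma st12_bd (ν c : ℕ → ℝ) (A : ℝ)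
    (hc : ∀ j, |c j| ≤ A) (δ R : ℝ) (hδ : 0 < δ) :
    ∀ z : ℂ, ‖z‖ ≤ R → (∀ j, c j ≠ 0 → δ ≤ ‖z + (ν j : ℂ)‖) →
      ∀ j, ‖(c j : ℂ) / (z + (ν j : ℂ))‖ ≤ |A| / max δ (ν j - R) := by
  intro z hz hlow j
  have hpos : (0:ℝ) < max δ (ν j - R) := lt_of_lt_of_le hδ (le_max_left _ _)
  by_cases h : c j = 0
  · simp only [h, Complex.ofReal_zero, zero_div, norm_zero]
    positivity
  · have h1 : δ ≤ ‖z + (ν j : ℂ)‖ := hlow j h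
    have h2 : ν j - R ≤ ‖z + (ν j : ℂ)‖ := by
      have h3 : ‖((ν j : ℝ) : ℂ)‖ - ‖-z‖ ≤ ‖((ν j : ℝ):ℂ) - (-z)‖ := norm_sub_norm_le _ _
      have h4 : ((ν j : ℝ):ℂ) - (-z) = z + (ν j : ℂ) := by ring
      rw [h4] at h3
      have h5 : ν j ≤ ‖((ν j : ℝ) : ℂ)‖ := by
        rw [Complex.norm_real, Real.norm_eq_abs]; exact le_abs_self _
      rw [norm_neg] at h3
      linarith
    have hD : max δ (ν j - R) ≤ ‖z + (ν j : ℂ)‖ := max_le h1 h2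
    rw [norm_div]
    have hnum : ‖((c j : ℝ) : ℂ)‖ ≤ |A| := by
      rw [Complex.norm_real, Real.norm_eq_abs]; exact (hc j).trans (le_abs_self A)
    exact div_le_div₀ (abs_nonneg A) hnum hpos hD

private lemma st12_open (ν : ℕ → ℝ) (C : ℝ)
    (hν : ∀ j, |ν j - (((j:ℝ) + 1) * Real.pi)^2| ≤ C) :
    IsOpen {z : ℂ | ∀ j, z + (ν j : ℂ) ≠ 0} := by
  rw [Metric.isOpen_iff]
  intro x hx
  have hπ : Real.pi > 3 := Real.pi_gt_three
  have h9 : (9:ℝ) ≤ Real.pi^2 := by nlinarith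
  have hfin : {j : ℕ | ν j ≤ ‖x‖ + 1}.Finite := by
    apply Set.Finite.subset (Set.finite_Iic ⌈C + ‖x‖ + 1⌉₊)
    intro j hj
    simp only [Set.mem_setOf_eq] at hj
    simp only [Set.mem_Iic]
    have h1 := (abs_le.1 (hν j)).1
    have e : (((j:ℝ)+1)*Real.pi)^2 = ((j:ℝ)+1)^2*Real.pi^2 := by ring
    have k1 : ((j:ℝ)+1)^2*9 ≤ ((j:ℝ)+1)^2*Real.pi^2 :=
      mul_le_mul_of_nonneg_left h9 (by positivity)
    have k2 : (j:ℝ) ≤ ((j:ℝ)+1)^2*9 := by nlinarith [Nat.cast_nonneg (α := ℝ) j]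
    have hj' : (j:ℝ) ≤ C + ‖x‖ + 1 := by nlinarith
    exact_mod_cast hj'.trans (Nat.le_ceil _)
  set Tf := hfin.toFinset with hTf
  set S := insert (1:ℝ) (Tf.image fun j => ‖x + (ν j : ℂ)‖) with hS
  have hSne : S.Nonempty := ⟨1, Finset.mem_insert_self _ _⟩
  set m := S.min' hSne with hm
  have hm_pos : 0 < m := by
    have hmem : m ∈ S := S.min'_mem hSne
    rcases Finset.mem_insert.1 hmem with h | h
    · rw [h]; norm_num
    · obtain ⟨j, _, hj⟩ := Finset.mem_image.1 h
      rw [← hj]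
      exact norm_pos_iff.mpr (hx j)
  refine ⟨min (1/2) (m/2), by positivity, ?_⟩
  intro z hz
  rw [Metric.mem_ball] at hz
  intro j
  rw [← norm_pos_iff]
  by_cases hcase : ν j ≤ ‖x‖ + 1
  · have hjT : j ∈ Tf := by rw [hTf, Set.Finite.mem_toFinset]; exact hcase
    have hmle : m ≤ ‖x + (ν j : ℂ)‖ :=
      Finset.min'_le _ _ (Finset.mem_insert_of_mem (Finset.mem_image_of_mem _ hjT))
    have htri : ‖x + (ν j : ℂ)‖ - ‖z - x‖ ≤ ‖z + (ν j : ℂ)‖ := by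
      have := norm_sub_norm_le (x + (ν j : ℂ)) (x - z)
      have e : x + (ν j : ℂ) - (x - z) = z + (ν j : ℂ) := by ring
      rw [e] at this
      have e2 : ‖x - z‖ = ‖z - x‖ := norm_sub_rev _ _
      linarith [this, e2.le, e2.ge]
    have hdist : ‖z - x‖ < m/2 := lt_of_lt_of_le (by rw [← dist_eq_norm]; exact hz) (min_le_right _ _)
    linarith
  · push_neg at hcase
    have hzn : ‖z‖ ≤ ‖x‖ + 1/2 := by
      have : ‖z - x‖ < 1/2 := lt_of_lt_of_le (by rw [← dist_eq_norm]; exact hz) (min_le_left _ _)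
      have := norm_sub_norm_le z x
      linarith [norm_sub_norm_le z x]
    have h2 : ν j - ‖z‖ ≤ ‖z + (ν j : ℂ)‖ := by
      have h3 : ‖((ν j : ℝ) : ℂ)‖ - ‖-z‖ ≤ ‖((ν j : ℝ):ℂ) - (-z)‖ := norm_sub_norm_le _ _
      have h4 : ((ν j : ℝ):ℂ) - (-z) = z + (ν j : ℂ) := by ring
      rw [h4, norm_neg] at h3
      have h5 : ν j ≤ ‖((ν j : ℝ) : ℂ)‖ := by
        rw [Complex.norm_real, Real.norm_eq_abs]; exact le_abs_self _
      linarith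
    linarith

private lemma st12_diff (ν c : ℕ → ℝ) (C A : ℝ)
    (hν : ∀ j, |ν j - (((j:ℝ) + 1) * Real.pi)^2| ≤ C)
    (hc : ∀ j, |c j| ≤ A) :
    DifferentiableOn ℂ (fun z : ℂ => ∑' j, (c j : ℂ) / (z + (ν j : ℂ)))
      {z : ℂ | ∀ j, z + (ν j : ℂ) ≠ 0} := by
  intro w hw
  obtain ⟨δ, hδpos, hball⟩ := Metric.isOpen_iff.1 (st12_open ν C hν) w hw
  have hδ2 : 0 < δ/2 := by positivity
  set s := Metric.ball w (δ/2) with hs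
  have hsU : s ⊆ {z : ℂ | ∀ j, z + (ν j : ℂ) ≠ 0} := by
    intro z hz
    exact hball (Metric.ball_subset_ball (by linarith) hz)
  have hR : ∀ z ∈ s, ‖z‖ ≤ ‖w‖ + δ := by
    intro z hz
    rw [hs, Metric.mem_ball, dist_eq_norm] at hz
    have := norm_sub_norm_le z w
    linarith
  have hlow : ∀ z ∈ s, ∀ j, δ/2 ≤ ‖z + (ν j : ℂ)‖ := by
    intro z hz j
    have hpole : -(ν j : ℂ) ∉ Metric.ball w δ := by
      intro hmem
      exact hball hmem j (by ring)
    have h1 : δ ≤ dist (-(ν j : ℂ)) w := not_lt.1 (fun h => hpole (Metric.mem_ball.2 h))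
    rw [hs, Metric.mem_ball] at hz
    have h2 : dist (-(ν j : ℂ)) w ≤ dist (-(ν j:ℂ)) z + dist z w := dist_triangle _ _ _
    have h3 : dist (-(ν j:ℂ)) z = ‖z + (ν j : ℂ)‖ := by
      rw [dist_eq_norm]
      rw [show -(ν j : ℂ) - z = -(z + (ν j:ℂ)) by ring, norm_neg]
    linarith
  have hsum := st12_summ ν C hν A (‖w‖ + δ) (δ/2) hδ2
  have hbd := st12_bd ν c A hc (δ/2) (‖w‖ + δ) hδ2
  have htu : TendstoUniformlyOn
      (fun (t : Finset ℕ) z => ∑ j ∈ t, (c j : ℂ) / (z + (ν j : ℂ)))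
      (fun z => ∑' j, (c j : ℂ) / (z + (ν j : ℂ))) atTop s :=
    tendstoUniformlyOn_tsum hsum
      (fun j z hz => hbd z (hR z hz) (fun i _ => hlow z hz i) j)
  have hpart : ∀ᶠ (t : Finset ℕ) in atTop,
      DifferentiableOn ℂ (fun z => ∑ j ∈ t, (c j : ℂ) / (z + (ν j : ℂ))) s := by
    apply Eventually.of_forall
    intro t
    apply DifferentiableOn.fun_sum
    intro j _
    apply DifferentiableOn.div (differentiableOn_const _)
    · exact (differentiable_id.add_const _).differentiableOn
    · intro z hz
      exact hsU hz j
  have hdiff : DifferentiableOn ℂ (fun z => ∑' j, (c j : ℂ) / (z + (ν j : ℂ))) s :=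
    htu.tendstoLocallyUniformlyOn.differentiableOn hpart Metric.isOpen_ball
  exact (hdiff.differentiableAt
    (Metric.isOpen_ball.mem_nhds (Metric.mem_ball_self hδ2))).differentiableWithinAt

/-- if two Dirichlet-type series of simple fractions with exponents
`λ_k = (kπ)² + O(1)`, `μ_k = (kπ)² + O(1)` and bounded coefficients agree on a real
half-line, then every exponent of the first with nonzero coefficient occurs among the
exponents of the second. -/
theorem statement12
    (lam mu a b : ℕ → ℝ)
    (hlam : StrictMono lam) (hmu : StrictMono mu)
    (hlam_asymp : ∃ C : ℝ, ∀ k, |lam k - (((k:ℝ) + 1) * Real.pi)^2| ≤ C)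
    (hmu_asymp : ∃ C : ℝ, ∀ k, |mu k - (((k:ℝ) + 1) * Real.pi)^2| ≤ C)
    (ha : ∃ A : ℝ, ∀ k, |a k| ≤ A) (hb : ∃ B : ℝ, ∀ k, |b k| ≤ B)
    (heq : ∀ z : ℝ, z > max (-(lam 0)) (-(mu 0)) →
      ∑' k, a k / (z + lam k) = ∑' k, b k / (z + mu k)) :
    ∀ k : ℕ, a k ≠ 0 → ∃ l : ℕ, lam k = mu l := by
  intro k hak
  by_contra hcon
  push_neg at hcon
  obtain ⟨C₁, hC₁⟩ := hlam_asymp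
  obtain ⟨C₂, hC₂⟩ := hmu_asymp
  obtain ⟨A, hA⟩ := ha
  obtain ⟨B, hB⟩ := hb
  have hA0 : 0 ≤ A := (abs_nonneg (a 0)).trans (hA 0)
  set F : ℂ → ℂ := fun z => ∑' j, (a j : ℂ) / (z + (lam j : ℂ)) with hF
  set G : ℂ → ℂ := fun z => ∑' j, (b j : ℂ) / (z + (mu j : ℂ)) with hG
  set U : Set ℂ :=
    {z | ∀ j, z + (lam j:ℂ) ≠ 0} ∩ {z | ∀ l, z + (mu l:ℂ) ≠ 0} with hU
  have hUopen : IsOpen U := (st12_open lam C₁ hC₁).inter (st12_open mu C₂ hC₂)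
  -- preconnectedness
  have hUconn : IsPreconnected U := by
    have hUeq : U =
        ((Set.range fun j => -(lam j : ℂ)) ∪ (Set.range fun l => -(mu l : ℂ)))ᶜ := by
      ext z
      constructor
      · rintro ⟨h1, h2⟩ hz
        rcases hz with ⟨j, hj⟩ | ⟨l, hl⟩
        · exact h1 j (by rw [← hj]; ring)
        · exact h2 l (by rw [← hl]; ring)
      · intro hz
        refine ⟨fun j hj => hz ?_, fun l hl => hz ?_⟩
        · exact Or.inl ⟨j, by linear_combination -hj⟩
        · exact Or.inr ⟨l, by linear_combination -hl⟩
    rw [hUeq]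
    exact (((Set.countable_range _).union
      (Set.countable_range _)).isPathConnected_compl_of_one_lt_rank
      (by rw [Complex.rank_real_complex]; norm_num)).isConnected.isPreconnected
  -- analyticity
  have hFa : AnalyticOnNhd ℂ F U :=
    DifferentiableOn.analyticOnNhd
      ((st12_diff lam a C₁ A hC₁ hA).mono Set.inter_subset_left) hUopen
  have hGa : AnalyticOnNhd ℂ G U :=
    DifferentiableOn.analyticOnNhd
      ((st12_diff mu b C₂ B hC₂ hB).mono Set.inter_subset_right) hUopen
  set M := max (-(lam 0)) (-(mu 0)) with hM
  have hmemU : ∀ r : ℝ, r > M → ((r:ℂ) ∈ U) := by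
    intro r hr
    constructor
    · intro j
      have h1 : lam 0 ≤ lam j := hlam.monotone (Nat.zero_le j)
      have h2 : -(lam 0) ≤ M := le_max_left _ _
      have hpos : (0:ℝ) < r + lam j := by linarith
      have he : (r:ℂ) + (lam j:ℂ) = ((r + lam j : ℝ):ℂ) := by push_cast; ring
      rw [he]
      exact Complex.ofReal_ne_zero.mpr (ne_of_gt hpos)
    · intro l
      have h1 : mu 0 ≤ mu l := hmu.monotone (Nat.zero_le l)
      have h2 : -(mu 0) ≤ M := le_max_right _ _
      have hpos : (0:ℝ) < r + mu l := by linarith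
      have he : (r:ℂ) + (mu l:ℂ) = ((r + mu l : ℝ):ℂ) := by push_cast; ring
      rw [he]
      exact Complex.ofReal_ne_zero.mpr (ne_of_gt hpos)
  have hFreal : ∀ r : ℝ, F (r:ℂ) = ((∑' j, a j / (r + lam j) : ℝ) : ℂ) := by
    intro r
    rw [hF, Complex.ofReal_tsum]
    exact tsum_congr fun j => by push_cast; ring
  have hGreal : ∀ r : ℝ, G (r:ℂ) = ((∑' j, b j / (r + mu j) : ℝ) : ℂ) := by
    intro r
    rw [hG, Complex.ofReal_tsum]
    exact tsum_congr fun j => by push_cast; ring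
  have hfreq : ∃ᶠ z in 𝓝[≠] ((M+1:ℝ):ℂ), F z = G z := by
    have htend : Tendsto (fun n : ℕ => ((M + 1 + 1/((n:ℝ)+1) : ℝ) : ℂ)) atTop
        (𝓝[≠] ((M+1:ℝ):ℂ)) := by
      rw [tendsto_nhdsWithin_iff]
      constructor
      · have hr : Tendsto (fun n : ℕ => (M + 1 + 1/((n:ℝ)+1))) atTop (𝓝 (M+1)) := by
          have h0 : Tendsto (fun n : ℕ => 1/((n:ℝ)+1)) atTop (𝓝 0) := tendsto_one_div_add_atTop_nhds_zero_nat
          simpa using tendsto_const_nhds.add h0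
        exact (Complex.continuous_ofReal.tendsto _).comp hr
      · apply Eventually.of_forall
        intro n
        simp only [Set.mem_compl_iff, Set.mem_singleton_iff]
        intro hcontra
        have h1 : M + 1 + 1/((n:ℝ)+1) = M + 1 := Complex.ofReal_injective hcontra
        have h2 : (0:ℝ) < 1/((n:ℝ)+1) := by positivity
        linarith
    apply htend.frequently
    apply Frequently.of_forall
    intro n
    have hr : M + 1 + 1/((n:ℝ)+1) > M := by
      have h2 : (0:ℝ) < 1/((n:ℝ)+1) := by positivity
      linarith
    rw [hFreal, hGreal, heq _ hr]
  have hEq : Set.EqOn F G U :=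
    hFa.eqOn_of_preconnected_of_frequently_eq hGa hUconn
      (hmemU (M+1) (by linarith)) hfreq
  -- the contradiction near the pole -lam k
  set p : ℂ := ((-(lam k) : ℝ) : ℂ) with hp
  have hpUmu : p ∈ {z : ℂ | ∀ l, z + (mu l : ℂ) ≠ 0} := by
    intro l
    have he : p + (mu l:ℂ) = ((mu l - lam k : ℝ):ℂ) := by rw [hp]; push_cast; ring
    rw [he]
    exact Complex.ofReal_ne_zero.mpr (sub_ne_zero.mpr (fun h => hcon l h.symm))
  obtain ⟨δ₁, hδ₁pos, hball₁⟩ := Metric.isOpen_iff.1 (st12_open mu C₂ hC₂) p hpUmu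
  set ν' : ℕ → ℝ := Function.update lam k (lam k + 1) with hν'def
  have hν' : ∀ j, |ν' j - (((j:ℝ) + 1) * Real.pi)^2| ≤ C₁ + 1 := by
    intro j
    by_cases hj : j = k
    · subst hj
      rw [hν'def, Function.update_self]
      have h1 := hC₁ j
      have he : lam j + 1 - (((j:ℝ)+1)*Real.pi)^2
          = (lam j - (((j:ℝ)+1)*Real.pi)^2) + 1 := by ring
      rw [he]
      calc |(lam j - (((j:ℝ)+1)*Real.pi)^2) + 1|
          ≤ |lam j - (((j:ℝ)+1)*Real.pi)^2| + |1| := abs_add_le _ _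
        _ ≤ C₁ + 1 := by rw [abs_one]; linarith
    · rw [hν'def, Function.update_of_ne hj]
      linarith [hC₁ j]
  have hpUν' : p ∈ {z : ℂ | ∀ j, z + (ν' j : ℂ) ≠ 0} := by
    intro j
    by_cases hj : j = k
    · subst hj
      have he : p + (ν' j : ℂ) = ((1:ℝ):ℂ) := by
        rw [hp, hν'def, Function.update_self]; push_cast; ring
      rw [he]; norm_num
    · have he : p + (ν' j : ℂ) = ((lam j - lam k : ℝ):ℂ) := by
        rw [hp, hν'def, Function.update_of_ne hj]; push_cast; ring
      rw [he]
      exact Complex.ofReal_ne_zero.mpr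
        (sub_ne_zero.mpr (fun h => hj (hlam.injective h)))
  obtain ⟨δ₂, hδ₂pos, hball₂⟩ := Metric.isOpen_iff.1 (st12_open ν' (C₁+1) hν') p hpUν'
  set d := min δ₁ δ₂ with hd
  have hdpos : 0 < d := lt_min hδ₁pos hδ₂pos
  have hd2 : 0 < d/2 := by positivity
  have hlowmu : ∀ z : ℂ, ‖z - p‖ ≤ d/2 → ∀ l, d/2 ≤ ‖z + (mu l : ℂ)‖ := by
    intro z hzd l
    have hpole : -(mu l : ℂ) ∉ Metric.ball p δ₁ := fun hmem => hball₁ hmem l (by ring)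
    have h1 : δ₁ ≤ dist (-(mu l : ℂ)) p := not_lt.1 (fun h => hpole (Metric.mem_ball.2 h))
    have h2 : dist (-(mu l:ℂ)) p ≤ dist (-(mu l:ℂ)) z + dist z p := dist_triangle _ _ _
    have h3 : dist (-(mu l:ℂ)) z = ‖z + (mu l : ℂ)‖ := by
      rw [dist_eq_norm, show -(mu l : ℂ) - z = -(z + (mu l:ℂ)) by ring, norm_neg]
    have h4 : dist z p = ‖z - p‖ := dist_eq_norm _ _
    have h5 : d ≤ δ₁ := min_le_left _ _
    linarith
  have hlowlam : ∀ z : ℂ, ‖z - p‖ ≤ d/2 → ∀ j, j ≠ k → d/2 ≤ ‖z + (lam j : ℂ)‖ := by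
    intro z hzd j hj
    have hpole : -(lam j : ℂ) ∉ Metric.ball p δ₂ := by
      intro hmem
      apply hball₂ hmem j
      rw [hν'def, Function.update_of_ne hj]; ring
    have h1 : δ₂ ≤ dist (-(lam j : ℂ)) p := not_lt.1 (fun h => hpole (Metric.mem_ball.2 h))
    have h2 : dist (-(lam j:ℂ)) p ≤ dist (-(lam j:ℂ)) z + dist z p := dist_triangle _ _ _
    have h3 : dist (-(lam j:ℂ)) z = ‖z + (lam j : ℂ)‖ := by
      rw [dist_eq_norm, show -(lam j : ℂ) - z = -(z + (lam j:ℂ)) by ring, norm_neg]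
    have h4 : dist z p = ‖z - p‖ := dist_eq_norm _ _
    have h5 : d ≤ δ₂ := min_le_right _ _
    linarith
  set R := |lam k| + 1 with hR
  set c' : ℕ → ℝ := fun j => if j = k then 0 else a j with hc'def
  have hc' : ∀ j, |c' j| ≤ A := by
    intro j
    rw [hc'def]
    by_cases hj : j = k
    · simp [hj, hA0]
    · simp only [hj, if_false]; exact hA j
  have hsum₁ := st12_summ mu C₂ hC₂ B R (d/2) hd2
  have hsum₂ := st12_summ lam C₁ hC₁ A R (d/2) hd2
  set S₁ := ∑' (l : ℕ), |B| / max (d/2) (mu l - R) with hS₁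
  set S₂ := ∑' (j : ℕ), |A| / max (d/2) (lam j - R) with hS₂
  have hS₁0 : 0 ≤ S₁ := tsum_nonneg (fun l =>
    div_nonneg (abs_nonneg _) (le_of_lt (lt_of_lt_of_le hd2 (le_max_left _ _))))
  have hS₂0 : 0 ≤ S₂ := tsum_nonneg (fun j =>
    div_nonneg (abs_nonneg _) (le_of_lt (lt_of_lt_of_le hd2 (le_max_left _ _))))
  have habs : 0 < |a k| := abs_pos.mpr hak
  set t := min (min 1 (d/2)) (|a k| / (S₁ + S₂ + 1)) with ht
  have htpos : 0 < t := by
    apply lt_min (lt_min one_pos hd2)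
    positivity
  have ht1 : t ≤ 1 := le_trans (min_le_left _ _) (min_le_left _ _)
  have htd : t ≤ d/2 := le_trans (min_le_left _ _) (min_le_right _ _)
  have hta : t ≤ |a k| / (S₁ + S₂ + 1) := min_le_right _ _
  set z : ℂ := ((-(lam k) + t : ℝ) : ℂ) with hz
  have hzp : ‖z - p‖ ≤ d/2 := by
    have he : z - p = ((t:ℝ):ℂ) := by rw [hz, hp]; push_cast; ring
    rw [he, Complex.norm_real, Real.norm_eq_abs, abs_of_pos htpos]
    exact htd
  have hzR : ‖z‖ ≤ R := by
    rw [hz, Complex.norm_real, Real.norm_eq_abs, hR]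
    calc |(-(lam k) + t)| ≤ |(-(lam k))| + |t| := abs_add_le _ _
      _ ≤ |lam k| + 1 := by rw [abs_neg, abs_of_pos htpos]; linarith
  have hztk : z + (lam k : ℂ) = ((t:ℝ):ℂ) := by rw [hz]; push_cast; ring
  have hbdG := st12_bd mu b B hB (d/2) R hd2 z hzR (fun l _ => hlowmu z hzp l)
  have hsumGn : Summable (fun l => ‖(b l:ℂ)/(z + (mu l:ℂ))‖) :=
    Summable.of_nonneg_of_le (fun _ => norm_nonneg _) hbdG hsum₁
  have hGz : ‖G z‖ ≤ S₁ := by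
    calc ‖G z‖ ≤ ∑' (l:ℕ), ‖(b l:ℂ)/(z + (mu l:ℂ))‖ := norm_tsum_le_tsum_norm hsumGn
      _ ≤ S₁ := Summable.tsum_le_tsum hbdG hsumGn hsum₁
  have hlowc' : ∀ j, c' j ≠ 0 → d/2 ≤ ‖z + (lam j : ℂ)‖ := by
    intro j hcj
    have hj : j ≠ k := by
      intro h
      apply hcj
      rw [hc'def]; simp [h]
    exact hlowlam z hzp j hj
  have hbdH := st12_bd lam c' A hc' (d/2) R hd2 z hzR hlowc'
  have hsumHn : Summable (fun j => ‖(c' j:ℂ)/(z + (lam j:ℂ))‖) :=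
    Summable.of_nonneg_of_le (fun _ => norm_nonneg _) hbdH hsum₂
  have hsumH : Summable (fun j => (c' j:ℂ)/(z + (lam j:ℂ))) := hsumHn.of_norm
  have hHz : ‖∑' (j:ℕ), (c' j:ℂ)/(z + (lam j:ℂ))‖ ≤ S₂ := by
    calc ‖∑' (j:ℕ), (c' j:ℂ)/(z + (lam j:ℂ))‖
        ≤ ∑' (j:ℕ), ‖(c' j:ℂ)/(z + (lam j:ℂ))‖ := norm_tsum_le_tsum_norm hsumHn
      _ ≤ S₂ := Summable.tsum_le_tsum hbdH hsumHn hsum₂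
  have hsume : Summable (fun j => if j = k then (a k:ℂ)/(z + (lam k:ℂ)) else 0) :=
    (hasSum_ite_eq k _).summable
  have hfe : (fun j => (a j:ℂ)/(z + (lam j:ℂ)))
      = fun j => (c' j:ℂ)/(z + (lam j:ℂ)) + (if j = k then (a k:ℂ)/(z + (lam k:ℂ)) else 0) := by
    funext j
    by_cases hj : j = k
    · subst hj; rw [hc'def]; simp
    · rw [hc'def]; simp [hj]
  have hsumF : Summable (fun j => (a j:ℂ)/(z + (lam j:ℂ))) := by
    rw [hfe]; exact hsumH.add hsume
  have hsplit : F z = (a k:ℂ)/(z + (lam k:ℂ)) + ∑' (j:ℕ), (c' j:ℂ)/(z + (lam j:ℂ)) := by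
    rw [hF]
    show (∑' (j:ℕ), (a j:ℂ)/(z + (lam j:ℂ)))
        = (a k:ℂ)/(z + (lam k:ℂ)) + ∑' (j:ℕ), (c' j:ℂ)/(z + (lam j:ℂ))
    rw [Summable.tsum_eq_add_tsum_ite hsumF k]
    congr 1
    apply tsum_congr
    intro j
    by_cases hj : j = k
    · subst hj; simp [hc'def]
    · simp [hj, hc'def]
  have hzU : z ∈ U := by
    constructor
    · intro j
      by_cases hj : j = k
      · subst hj; rw [hztk]
        exact Complex.ofReal_ne_zero.mpr (ne_of_gt htpos)
      · have hlb := hlowlam z hzp j hj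
        intro h0; rw [h0, norm_zero] at hlb; linarith
    · intro l
      have hlb := hlowmu z hzp l
      intro h0; rw [h0, norm_zero] at hlb; linarith
  have hkey : (a k:ℂ)/(z + (lam k:ℂ)) = G z - ∑' (j:ℕ), (c' j:ℂ)/(z + (lam j:ℂ)) := by
    have hfg := hEq hzU
    rw [hsplit] at hfg
    linear_combination hfg
  have hnorm : ‖(a k:ℂ)/(z + (lam k:ℂ))‖ ≤ S₁ + S₂ := by
    rw [hkey]
    calc ‖G z - ∑' (j:ℕ), (c' j:ℂ)/(z + (lam j:ℂ))‖
        ≤ ‖G z‖ + ‖∑' (j:ℕ), (c' j:ℂ)/(z + (lam j:ℂ))‖ := norm_sub_le _ _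
      _ ≤ S₁ + S₂ := add_le_add hGz hHz
  have hval : ‖(a k:ℂ)/(z + (lam k:ℂ))‖ = |a k| / t := by
    rw [hztk, norm_div, Complex.norm_real, Complex.norm_real,
      Real.norm_eq_abs, Real.norm_eq_abs, abs_of_pos htpos]
  have hge : S₁ + S₂ + 1 ≤ |a k| / t := by
    rw [le_div_iff₀ htpos]
    have hmul := (le_div_iff₀ (by positivity : (0:ℝ) < S₁ + S₂ + 1)).mp hta
    linarith [hmul]
  rw [hval] at hnorm
  linarith
end
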